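/- arXiv:1311.3895 — 4 statements merged into one kernel-verified Lean document; each statement's English description precedes it below -/
import Mathlib

section
/- Let d ≥ 1 and μ ∈ M_c^+(ℝ^d). If limsup_{r→0⁺} log(inf{μ(B(x,r)) : x ∈ supp(μ)})/log r < ∞ then dom(τ_μ) = ℝ, and otherwise dom(τ_μ) = [0,∞). Moreover τ_μ* is non-negative on its domain: τ_μ*(α) ≥ 0 for every α ∈ ℝ∪{∞} with τ_μ*(α) > −∞. -/
open MeasureTheory Metric Set Filter Topology
open scoped ENNReal NNReal

noncomputable section

/-- `ℝ^d` with the Euclidean metric. -/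
abbrev Euc (d : ℕ) : Type := EuclideanSpace ℝ (Fin d)

/-- The topological support of a Borel measure on `ℝ^d`. -/
def msupp {d : ℕ} (μ : Measure (Euc d)) : Set (Euc d) :=
  {x | ∀ r : ℝ, 0 < r → 0 < μ (closedBall x r)}

/-- `μ ∈ 𝓜_c^+(ℝ^d)`: a nonzero finite compactly supported Borel measure. -/
def McPlus {d : ℕ} (μ : Measure (Euc d)) : Prop :=
  IsFiniteMeasure μ ∧ μ ≠ 0 ∧ ∃ K : Set (Euc d), IsCompact K ∧ μ Kᶜ = 0

/-- Logarithm `ℝ≥0∞ → EReal`, with `log 0 = ⊥` and `log ⊤ = ⊤`. -/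
def elog (x : ℝ≥0∞) : EReal :=
  if x = 0 then ⊥ else if x = ⊤ then ⊤ else ((Real.log x.toReal : ℝ) : EReal)

/-- Lower local dimension `liminf_{r→0⁺} log μ(B(x,r)) / log r`, valued in `EReal`. -/
def dLow {d : ℕ} (μ : Measure (Euc d)) (x : Euc d) : EReal :=
  Filter.liminf
    (fun r : ℝ => elog (μ (closedBall x r)) * (((Real.log r)⁻¹ : ℝ) : EReal)) (𝓝[>] (0:ℝ))

/-- Upper local dimension `limsup_{r→0⁺} log μ(B(x,r)) / log r`, valued in `EReal`. -/
def dUp {d : ℕ} (μ : Measure (Euc d)) (x : Euc d) : EReal :=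
  Filter.limsup
    (fun r : ℝ => elog (μ (closedBall x r)) * (((Real.log r)⁻¹ : ℝ) : EReal)) (𝓝[>] (0:ℝ))

/-- The level set `E(μ,α,β)`. -/
def Eab {d : ℕ} (μ : Measure (Euc d)) (α β : EReal) : Set (Euc d) :=
  {x ∈ msupp μ | dLow μ x = α ∧ dUp μ x = β}

/-- The level set `E̲(μ,α)`. -/
def Elow {d : ℕ} (μ : Measure (Euc d)) (α : EReal) : Set (Euc d) :=
  {x ∈ msupp μ | dLow μ x = α}

/-- The level set `Ē(μ,α)`. -/
def Eup {d : ℕ} (μ : Measure (Euc d)) (α : EReal) : Set (Euc d) :=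
  {x ∈ msupp μ | dUp μ x = α}

/-- The level set `E(μ,α) = E(μ,α,α)`. -/
def Epoint {d : ℕ} (μ : Measure (Euc d)) (α : EReal) : Set (Euc d) := Eab μ α α

-- Hausdorff dimension with the convention `dim_H ∅ = −∞`, valued in `EReal`.
open Classical in
def dimHE {X : Type*} [EMetricSpace X] (s : Set X) : EReal :=
  if s = ∅ then ⊥ else ((dimH s : ℝ≥0∞) : EReal)

/-- A centered packing of `supp μ` by pairwise disjoint closed balls of radius `r`. -/
def IsPacking {d : ℕ} (μ : Measure (Euc d)) (r : ℝ) (P : Set (Euc d)) : Prop :=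
  P ⊆ msupp μ ∧ P.PairwiseDisjoint fun x => closedBall x r

/-- `sup { Σ_i μ(B(x_i,r))^q }` over all centered packings of radius `r`. -/
def packSum {d : ℕ} (μ : Measure (Euc d)) (q r : ℝ) : ℝ≥0∞ :=
  ⨆ (P : Set (Euc d)) (_ : IsPacking μ r P), ∑' x : P, μ (closedBall (x : Euc d) r) ^ q

/-- The lower `L^q`-spectrum `τ_μ`. -/
def tauLow {d : ℕ} (μ : Measure (Euc d)) (q : ℝ) : EReal :=
  Filter.liminf (fun r : ℝ => elog (packSum μ q r) * (((Real.log r)⁻¹ : ℝ) : EReal)) (𝓝[>] (0:ℝ))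

/-- The upper `L^q`-spectrum `τ̄_μ`. -/
def tauUp {d : ℕ} (μ : Measure (Euc d)) (q : ℝ) : EReal :=
  Filter.limsup (fun r : ℝ => elog (packSum μ q r) * (((Real.log r)⁻¹ : ℝ) : EReal)) (𝓝[>] (0:ℝ))

/-- Extended concave Legendre–Fenchel transform of `τ : ℝ → ℝ∪{−∞}` at `α ∈ ℝ∪{∞}`;
the `EReal` product `α * q` encodes the conventions `∞·q = −∞` for `q < 0`, `∞·0 = 0`. -/
def eLegendre (τ : ℝ → EReal) (α : EReal) : EReal :=
  sInf {v : EReal | ∃ q : ℝ, τ q ≠ ⊥ ∧ (α = ⊤ → q ≤ 0) ∧ v = α * (q : EReal) - τ q}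

/-- Legendre–Fenchel transform `f*` of a spectrum `f` defined on `ℝ∪{∞}`;
the `EReal` product `q * α` encodes the conventions `q·∞ = ±∞` for `q ≷ 0`, `0·∞ = 0`. -/
def specStar (f : EReal → EReal) (q : ℝ) : EReal :=
  sInf {v : EReal | ∃ α : EReal, α ≠ ⊥ ∧ f α ≠ ⊥ ∧ v = (q : EReal) * α - f α}

/-- `sup #{i : lo ≤ μ(B(x_i,r)) ≤ hi}` over all centered packings of radius `r`. -/
def ldCount {d : ℕ} (μ : Measure (Euc d)) (lo hi : ℝ≥0∞) (r : ℝ) : ℝ≥0∞ :=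
  ⨆ (P : Set (Euc d)) (_ : IsPacking μ r P),
    ({x ∈ P | lo ≤ μ (closedBall x r) ∧ μ (closedBall x r) ≤ hi}).encard

/-- `r ^ γ` for an extended exponent `γ`, with the convention `r^∞ = 0`. -/
def rpowE (r : ℝ) (γ : EReal) : ℝ≥0∞ :=
  if γ = ⊤ then 0 else if γ = ⊥ then ⊤ else ENNReal.ofReal (r ^ γ.toReal)

/-- The lower large-deviations spectrum `f̲^LD_μ(α,β)` for `0 ≤ α ≤ β ≤ ∞`. -/
def fLDlowAB {d : ℕ} (μ : Measure (Euc d)) (α β : EReal) : EReal :=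
  if α = ⊤ then
    ⨅ A : ℝ, Filter.liminf
      (fun r : ℝ => elog (ldCount μ 0 (ENNReal.ofReal (r ^ A)) r) * (((-Real.log r)⁻¹ : ℝ) : EReal))
      (𝓝[>] (0:ℝ))
  else
    ⨅ (ε : ℝ) (_ : 0 < ε), Filter.liminf
      (fun r : ℝ =>
        elog (ldCount μ (rpowE r (β + (ε : EReal))) (rpowE r (α - (ε : EReal))) r) *
          (((-Real.log r)⁻¹ : ℝ) : EReal))
      (𝓝[>] (0:ℝ))

/-- The lower large-deviations spectrum `f̲^LD_μ(α)`. -/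
def fLDlow {d : ℕ} (μ : Measure (Euc d)) (α : EReal) : EReal := fLDlowAB μ α α

/-- The upper large-deviations spectrum `f̄^LD_μ(α)`. -/
def fLDup {d : ℕ} (μ : Measure (Euc d)) (α : EReal) : EReal :=
  if α = ⊤ then
    ⨅ A : ℝ, Filter.limsup
      (fun r : ℝ => elog (ldCount μ 0 (ENNReal.ofReal (r ^ A)) r) * (((-Real.log r)⁻¹ : ℝ) : EReal))
      (𝓝[>] (0:ℝ))
  else
    ⨅ (ε : ℝ) (_ : 0 < ε), Filter.limsup
      (fun r : ℝ =>
        elog (ldCount μ (rpowE r (α + (ε : EReal))) (rpowE r (α - (ε : EReal))) r) *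
          (((-Real.log r)⁻¹ : ℝ) : EReal))
      (𝓝[>] (0:ℝ))

/-- `μ` is exact dimensional with dimension `D`. -/
def ExactDim {d : ℕ} (μ : Measure (Euc d)) (D : ℝ) : Prop :=
  ∀ᵐ x ∂μ, Filter.Tendsto (fun r : ℝ => Real.log (μ (closedBall x r)).toReal / Real.log r)
    (𝓝[>] (0:ℝ)) (𝓝 D)

/-- `μ` is homogeneously multifractal: the lower Hausdorff spectrum of the restriction of `μ`
to any closed ball whose interior meets `supp μ` coincides with that of `μ`. -/
def HMmeas {d : ℕ} (μ : Measure (Euc d)) : Prop :=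
  ∀ (c : Euc d) (R : ℝ), (interior (closedBall c R) ∩ msupp μ).Nonempty →
    ∀ α : EReal, 0 ≤ α →
      dimHE (Elow (μ.restrict (closedBall c R)) α) = dimHE (Elow μ α)

/-- The necessary properties of an `L^q`-spectrum in dimension `d`. -/
structure IsLqSpec (d : ℕ) (τ : ℝ → EReal) : Prop where
  ne_top : ∀ q : ℝ, τ q ≠ ⊤
  concave : ∀ q₁ q₂ t : ℝ, 0 ≤ t → t ≤ 1 →
    ((t : ℝ) : EReal) * τ q₁ + (((1 - t : ℝ)) : EReal) * τ q₂ ≤ τ (t * q₁ + (1 - t) * q₂)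
  mono : Monotone τ
  at_one : τ 1 = 0
  neg_d_le : -(((d : ℝ)) : EReal) ≤ τ 0
  le_zero : τ 0 ≤ 0
  dom : {q : ℝ | τ q ≠ ⊥} = Set.univ ∨ {q : ℝ | τ q ≠ ⊥} = Set.Ici 0
  star_nonneg : ∀ α : EReal, eLegendre τ α ≠ ⊥ → 0 ≤ eLegendre τ α

/-- The class `𝓕(d)` of candidate lower Hausdorff spectra, viewed as functions on
`ℝ∪{∞} ⊂ EReal` (the value at `⊥` is irrelevant: the domain condition forces `f ⊥ = ⊥`). -/
structure IsFd (d : ℕ) (f : EReal → EReal) : Prop where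
  hasFix : ∃ D : ℝ, f ((D : ℝ) : EReal) = ((D : ℝ) : EReal)
  dom_sub : {α : EReal | f α ≠ ⊥} ⊆ Set.Ici (0 : EReal)
  dom_closed : IsClosed {α : EReal | f α ≠ ⊥}
  range' : ∀ α : EReal, f α = ⊥ ∨ (0 ≤ f α ∧ f α ≤ ((d : ℝ) : EReal))
  usc : UpperSemicontinuousOn f {α : EReal | ⊥ < α}
  le_id : ∀ α : EReal, f α ≤ α

/-- Concavity of a spectrum on the real part of its domain. -/
def SpecConcave (f : EReal → EReal) : Prop :=
  ∀ α₁ α₂ t : ℝ, f ((α₁ : ℝ) : EReal) ≠ ⊥ → f ((α₂ : ℝ) : EReal) ≠ ⊥ → 0 ≤ t → t ≤ 1 →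
    ((t : ℝ) : EReal) * f ((α₁ : ℝ) : EReal) + (((1 - t : ℝ)) : EReal) * f ((α₂ : ℝ) : EReal) ≤
      f (((t * α₁ + (1 - t) * α₂ : ℝ)) : EReal)


section StatementThreeHelpers

variable {d : ℕ} {μ : Measure (Euc d)}

private lemma ereal_bot_of_forall_le {x : EReal} (h : ∀ c : ℝ, x ≤ (c : EReal)) : x = ⊥ := by
  induction x with
  | bot => rfl
  | coe y =>
    exfalso
    have := EReal.coe_le_coe_iff.1 (h (y - 1))
    linarith
  | top =>
    exfalso
    exact (not_le.2 (EReal.coe_lt_top 0)) (h 0)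

private lemma ereal_cases (α : EReal) : α = ⊥ ∨ (∃ a : ℝ, α = (a : EReal)) ∨ α = ⊤ := by
  induction α with
  | bot => exact Or.inl rfl
  | coe a => exact Or.inr (Or.inl ⟨a, rfl⟩)
  | top => exact Or.inr (Or.inr rfl)

private lemma rpow_anti {a b : ℝ≥0∞} {q : ℝ} (hq : q ≤ 0) (hab : a ≤ b) : b ^ q ≤ a ^ q := by
  have h1 : b ^ q = (b ^ (-q))⁻¹ := by rw [← ENNReal.rpow_neg, neg_neg]
  have h2 : a ^ q = (a ^ (-q))⁻¹ := by rw [← ENNReal.rpow_neg, neg_neg]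
  rw [h1, h2]
  exact ENNReal.inv_le_inv.2 (ENNReal.rpow_le_rpow hab (by linarith))

private lemma msupp_nonempty (hμ : McPlus μ) : (msupp μ).Nonempty := by
  obtain ⟨hfin, hne, K, hKc, hK0⟩ := hμ
  rcases Set.eq_empty_or_nonempty (msupp μ) with he | h
  · exfalso
    have hx : ∀ x : Euc d, ∃ r : ℝ, 0 < r ∧ μ (closedBall x r) = 0 := by
      intro x
      have hxn : x ∉ msupp μ := by rw [he]; exact Set.notMem_empty x
      by_contra hc
      push_neg at hc
      exact hxn fun r hr => pos_iff_ne_zero.2 (hc r hr)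
    choose rad hrad hrad0 using hx
    obtain ⟨t, ht⟩ := hKc.elim_finite_subcover (fun x : Euc d => ball x (rad x))
      (fun x => isOpen_ball) (fun x _ => Set.mem_iUnion.2 ⟨x, mem_ball_self (hrad x)⟩)
    have hK : μ K = 0 := by
      refine le_antisymm ?_ (zero_le)
      calc μ K ≤ μ (⋃ i ∈ t, ball i (rad i)) := measure_mono ht
        _ ≤ ∑ i ∈ t, μ (ball i (rad i)) := measure_biUnion_finset_le t _
        _ ≤ ∑ i ∈ t, μ (closedBall i (rad i)) :=
            Finset.sum_le_sum fun i _ => measure_mono ball_subset_closedBall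
        _ = 0 := by simp [hrad0]
    have huniv : μ Set.univ = 0 := by
      refine le_antisymm ?_ (zero_le)
      calc μ Set.univ = μ (K ∪ Kᶜ) := by rw [Set.union_compl_self]
        _ ≤ μ K + μ Kᶜ := measure_union_le _ _
        _ = 0 := by rw [hK, hK0, add_zero]
    exact hne (Measure.measure_univ_eq_zero.1 huniv)
  · exact h

private lemma msupp_bdd (hμ : McPlus μ) : ∃ R : ℝ, 0 ≤ R ∧ msupp μ ⊆ closedBall 0 R := by
  obtain ⟨hfin, hne, K, hKc, hK0⟩ := hμ
  obtain ⟨R, hR⟩ := hKc.isBounded.subset_closedBall 0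
  refine ⟨max R 0, le_max_right _ _, ?_⟩
  intro x hx
  have hxK : x ∈ K := by
    by_contra hxK
    obtain ⟨ε, hε, hball⟩ := Metric.isOpen_iff.1 hKc.isClosed.isOpen_compl x hxK
    have h0 : μ (closedBall x (ε / 2)) = 0 := by
      refine measure_mono_null (fun y hy => hball ?_) hK0
      have hy' : dist y x ≤ ε / 2 := mem_closedBall.1 hy
      exact mem_ball.2 (lt_of_le_of_lt hy' (by linarith))
    exact absurd h0 (hx (ε / 2) (by linarith)).ne'
  exact closedBall_subset_closedBall (le_max_left R 0) (hR hxK)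

private lemma single_le_packSum {x : Euc d} (hx : x ∈ msupp μ) (q r : ℝ) :
    μ (closedBall x r) ^ q ≤ packSum μ q r := by
  have hP : IsPacking μ r {x} :=
    ⟨Set.singleton_subset_iff.2 hx, Set.pairwiseDisjoint_singleton _ _⟩
  have hts : (∑' y : ({x} : Set (Euc d)), μ (closedBall (y : Euc d) r) ^ q)
      = μ (closedBall x r) ^ q := tsum_singleton x (fun z => μ (closedBall z r) ^ q)
  unfold packSum
  rw [← hts]
  exact le_iSup_of_le {x} (le_iSup_of_le hP le_rfl)

private lemma packSum_pos [IsFiniteMeasure μ] {x : Euc d} (hx : x ∈ msupp μ) {r : ℝ}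
    (hr : 0 < r) (q : ℝ) : 0 < packSum μ q r :=
  lt_of_lt_of_le (ENNReal.rpow_pos (hx r hr) (measure_ne_top μ _)) (single_le_packSum hx q r)

private lemma packSum_le_aux {R : ℝ} (hR : 0 ≤ R) (hsub : msupp μ ⊆ closedBall 0 R)
    {r q A : ℝ} (hr : 0 < r) (hr1 : r ≤ 1)
    (hball : ∀ x ∈ msupp μ, μ (closedBall x r) ^ q ≤ ENNReal.ofReal (r ^ A)) :
    packSum μ q r ≤ ENNReal.ofReal ((volume (closedBall (0 : Euc d) (R + 1))).toReal
      / ((volume (closedBall (0 : Euc d) 1)).toReal * r ^ d) * r ^ A) := by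
  set V1 : ℝ := (volume (closedBall (0 : Euc d) 1)).toReal with hV1
  set CV : ℝ := (volume (closedBall (0 : Euc d) (R + 1))).toReal with hCV
  have hV1pos : 0 < V1 :=
    ENNReal.toReal_pos (measure_closedBall_pos volume _ one_pos).ne' measure_closedBall_lt_top.ne
  unfold packSum
  refine iSup_le fun P => iSup_le fun hP => ?_
  rw [ENNReal.tsum_eq_iSup_sum]
  refine iSup_le fun s => ?_
  set t : Finset (Euc d) := s.map ⟨Subtype.val, Subtype.val_injective⟩ with htdef
  have htsub : ∀ y ∈ t, y ∈ P := by
    intro y hy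
    obtain ⟨i, _, rfl⟩ := Finset.mem_map.1 hy
    exact i.2
  have hdisj : (↑t : Set (Euc d)).PairwiseDisjoint fun x => closedBall x r :=
    hP.2.subset fun y hy => htsub y hy
  have hv : ∀ y ∈ t, volume (closedBall y r)
      = ENNReal.ofReal (r ^ d) * volume (closedBall (0 : Euc d) 1) := by
    intro y _
    rw [Measure.addHaar_closedBall' volume y hr.le, finrank_euclideanSpace_fin]
  have hcard : (t.card : ℝ≥0∞) * (ENNReal.ofReal (r ^ d) * volume (closedBall (0 : Euc d) 1))
      ≤ volume (closedBall (0 : Euc d) (R + 1)) := by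
    calc (t.card : ℝ≥0∞) * (ENNReal.ofReal (r ^ d) * volume (closedBall (0 : Euc d) 1))
        = ∑ y ∈ t, volume (closedBall y r) := by
          rw [Finset.sum_congr rfl hv, Finset.sum_const, nsmul_eq_mul]
      _ = volume (⋃ y ∈ t, closedBall y r) :=
          (measure_biUnion_finset hdisj fun _ _ => measurableSet_closedBall).symm
      _ ≤ volume (closedBall (0 : Euc d) (R + 1)) := by
          refine measure_mono (Set.iUnion₂_subset fun y hy => closedBall_subset_closedBall' ?_)
          have hyR : dist y 0 ≤ R := mem_closedBall.1 (hsub (hP.1 (htsub y hy)))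
          linarith
  have hrd : 0 < r ^ d := pow_pos hr d
  have hcardR : (t.card : ℝ) ≤ CV / (V1 * r ^ d) := by
    have h1 := ENNReal.toReal_mono measure_closedBall_lt_top.ne hcard
    rw [ENNReal.toReal_mul, ENNReal.toReal_mul, ENNReal.toReal_ofReal hrd.le,
      ENNReal.toReal_natCast] at h1
    rw [le_div_iff₀ (by positivity)]
    nlinarith [h1]
  calc ∑ i ∈ s, μ (closedBall (i : Euc d) r) ^ q
      ≤ ∑ _i ∈ s, ENNReal.ofReal (r ^ A) :=
        Finset.sum_le_sum fun i _ => hball (i : Euc d) (hP.1 i.2)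
    _ = (s.card : ℝ≥0∞) * ENNReal.ofReal (r ^ A) := by
        rw [Finset.sum_const, nsmul_eq_mul]
    _ ≤ ENNReal.ofReal (CV / (V1 * r ^ d)) * ENNReal.ofReal (r ^ A) := by
        refine mul_le_mul_left ?_ _
        rw [show ((s.card : ℝ≥0∞)) = ENNReal.ofReal (s.card : ℝ) by
          rw [ENNReal.ofReal_natCast]]
        refine ENNReal.ofReal_le_ofReal ?_
        rw [show (s.card : ℝ) = (t.card : ℝ) by rw [htdef, Finset.card_map]]
        exact hcardR
    _ = ENNReal.ofReal (CV / (V1 * r ^ d) * r ^ A) := by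
        rw [ENNReal.ofReal_mul (div_nonneg ENNReal.toReal_nonneg (by positivity))]

private lemma tauLow_ge (hμ : McPlus μ) {R : ℝ} (hR : 0 ≤ R)
    (hsub : msupp μ ⊆ closedBall 0 R) (q A : ℝ)
    (h : ∀ᶠ r in 𝓝[>] (0:ℝ), ∀ x ∈ msupp μ, μ (closedBall x r) ^ q ≤ ENNReal.ofReal (r ^ A)) :
    ((A - d - 1 : ℝ) : EReal) ≤ tauLow μ q := by
  haveI : IsFiniteMeasure μ := hμ.1
  obtain ⟨x₀, hx₀⟩ := msupp_nonempty hμ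
  set V1 : ℝ := (volume (closedBall (0 : Euc d) 1)).toReal with hV1
  set CV : ℝ := (volume (closedBall (0 : Euc d) (R + 1))).toReal with hCV
  have hV1pos : 0 < V1 :=
    ENNReal.toReal_pos (measure_closedBall_pos volume _ one_pos).ne' measure_closedBall_lt_top.ne
  have hCVpos : 0 < CV :=
    ENNReal.toReal_pos (measure_closedBall_pos volume _ (by linarith)).ne'
      measure_closedBall_lt_top.ne
  set c₀ : ℝ := Real.log (CV / V1) with hc₀
  set r₀ : ℝ := min 2⁻¹ (Real.exp (-|c₀| - 1)) with hr₀def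
  have hr₀ : 0 < r₀ := lt_min (by norm_num) (Real.exp_pos _)
  unfold tauLow
  refine Filter.le_liminf_of_le (by isBoundedDefault) ?_
  refine ((h.and (Ioo_mem_nhdsGT hr₀)).mono ?_)
  rintro r ⟨hball, hrIoo⟩
  obtain ⟨hr, hrlt⟩ := hrIoo
  have hr1 : r < 1 := lt_of_lt_of_le hrlt (le_trans (min_le_left _ _) (by norm_num))
  have hS_le := packSum_le_aux hR hsub hr hr1.le hball
  set S := packSum μ q r with hSdef
  have hS_pos : 0 < S := packSum_pos hx₀ hr q
  have hrd : 0 < r ^ d := pow_pos hr d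
  set β : ℝ := CV / (V1 * r ^ d) * r ^ A with hβdef
  have hβpos : 0 < β := by
    have := Real.rpow_pos_of_pos hr A
    positivity
  have hS_top : S ≠ ⊤ := (lt_of_le_of_lt hS_le ENNReal.ofReal_lt_top).ne
  have hSR_pos : 0 < S.toReal := ENNReal.toReal_pos hS_pos.ne' hS_top
  have hSR_le : S.toReal ≤ β := ENNReal.toReal_le_of_le_ofReal hβpos.le hS_le
  have hlogr_neg : Real.log r < 0 := Real.log_neg hr hr1
  have hlogr_lt : Real.log r < -|c₀| - 1 := by
    have h1 : Real.log r < Real.log r₀ := Real.log_lt_log hr hrlt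
    have h2 : Real.log r₀ ≤ -|c₀| - 1 := by
      calc Real.log r₀ ≤ Real.log (Real.exp (-|c₀| - 1)) :=
            Real.log_le_log hr₀ (min_le_right _ _)
        _ = -|c₀| - 1 := Real.log_exp _
    linarith
  have hβeq : β = CV / V1 * r ^ (A - (d : ℝ)) := by
    rw [hβdef, Real.rpow_sub hr, Real.rpow_natCast]
    field_simp
  have hlogS : Real.log S.toReal ≤ c₀ + (A - d) * Real.log r := by
    calc Real.log S.toReal ≤ Real.log β := Real.log_le_log hSR_pos hSR_le
      _ = c₀ + (A - d) * Real.log r := by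
          have hcv : (0:ℝ) < CV / V1 := div_pos hCVpos hV1pos
          rw [hβeq, Real.log_mul hcv.ne' (Real.rpow_pos_of_pos hr _).ne', Real.log_rpow hr]
  have hfin : A - d - 1 ≤ Real.log S.toReal * (Real.log r)⁻¹ := by
    set l := Real.log r with hldef
    have hl : l < 0 := hlogr_neg
    have hle : (c₀ + (A - d) * l) * l⁻¹ ≤ Real.log S.toReal * l⁻¹ :=
      mul_le_mul_of_nonpos_right hlogS (inv_nonpos.2 hl.le)
    have hexp : (c₀ + (A - d) * l) * l⁻¹ = c₀ * l⁻¹ + (A - d) := by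
      field_simp [hl.ne]
    have hc₀l : -1 ≤ c₀ * l⁻¹ := by
      rw [← div_eq_mul_inv, le_div_iff_of_neg hl]
      have h3 : c₀ ≤ -l := le_trans (le_abs_self c₀) (by linarith)
      linarith
    linarith [hexp ▸ hle]
  have helogS : elog S = ((Real.log S.toReal : ℝ) : EReal) := by
    simp [elog, hS_pos.ne', hS_top]
  show ((A - d - 1 : ℝ) : EReal) ≤ elog S * (((Real.log r)⁻¹ : ℝ) : EReal)
  rw [helogS, ← EReal.coe_mul]
  exact EReal.coe_le_coe_iff.2 hfin

private lemma tauLow_le [IsFiniteMeasure μ] (q M : ℝ)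
    (h : ∃ᶠ r in 𝓝[>] (0:ℝ), ∃ x ∈ msupp μ, ENNReal.ofReal (r ^ M) ≤ μ (closedBall x r) ^ q) :
    tauLow μ q ≤ (M : EReal) := by
  unfold tauLow
  apply Filter.liminf_le_of_frequently_le'
  refine ((h.and_eventually (Filter.eventually_of_mem (Ioo_mem_nhdsGT one_pos)
    fun r hr => hr)).mono ?_)
  rintro r ⟨⟨x, hx, hxle⟩, hr, hr1⟩
  have hlogr : Real.log r < 0 := Real.log_neg hr hr1
  have hinv : (Real.log r)⁻¹ < 0 := inv_lt_zero.2 hlogr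
  have hSge : ENNReal.ofReal (r ^ M) ≤ packSum μ q r := hxle.trans (single_le_packSum hx q r)
  by_cases hS : packSum μ q r = ⊤
  · show elog (packSum μ q r) * (((Real.log r)⁻¹ : ℝ) : EReal) ≤ (M : EReal)
    rw [hS, show elog ⊤ = (⊤ : EReal) by simp [elog], EReal.top_mul_coe_of_neg hinv]
    exact bot_le
  · have hS_pos : 0 < packSum μ q r :=
      lt_of_lt_of_le (ENNReal.ofReal_pos.2 (Real.rpow_pos_of_pos hr M)) hSge
    have hle : r ^ M ≤ (packSum μ q r).toReal := (ENNReal.ofReal_le_iff_le_toReal hS).1 hSge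
    have hlog : M * Real.log r ≤ Real.log (packSum μ q r).toReal := by
      rw [← Real.log_rpow hr]
      exact Real.log_le_log (Real.rpow_pos_of_pos hr M) hle
    have hfin : Real.log (packSum μ q r).toReal * (Real.log r)⁻¹ ≤ M := by
      have h1 := mul_le_mul_of_nonpos_right hlog (le_of_lt hinv)
      have h2 : M * Real.log r * (Real.log r)⁻¹ = M := by field_simp [hlogr.ne]
      linarith [h2 ▸ h1]
    show elog (packSum μ q r) * (((Real.log r)⁻¹ : ℝ) : EReal) ≤ (M : EReal)
    rw [show elog (packSum μ q r) = ((Real.log (packSum μ q r).toReal : ℝ) : EReal) by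
      simp [elog, hS_pos.ne', hS], ← EReal.coe_mul]
    exact EReal.coe_le_coe_iff.2 hfin

private lemma tauLow_zero_le (hμ : McPlus μ) : tauLow μ 0 ≤ 0 := by
  haveI : IsFiniteMeasure μ := hμ.1
  obtain ⟨x₀, hx₀⟩ := msupp_nonempty hμ
  have h := tauLow_le (μ := μ) 0 0 ?_
  · rw [show ((0:ℝ) : EReal) = (0 : EReal) from rfl] at h
    exact h
  · refine Filter.Eventually.frequently (Filter.Eventually.of_forall fun r => ?_)
    exact ⟨x₀, hx₀, by simp [Real.rpow_zero, ENNReal.rpow_zero]⟩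

private lemma tauLow_ne_bot_nonneg (hμ : McPlus μ) {R : ℝ} (hR : 0 ≤ R)
    (hsub : msupp μ ⊆ closedBall 0 R) {q : ℝ} (hq : 0 ≤ q) : tauLow μ q ≠ ⊥ := by
  haveI : IsFiniteMeasure μ := hμ.1
  set m : ℝ := ((μ Set.univ) ^ q).toReal with hm
  have hm0 : 0 ≤ m := ENNReal.toReal_nonneg
  have hmne : (μ Set.univ) ^ q ≠ ⊤ := ENNReal.rpow_ne_top_of_nonneg hq (measure_ne_top μ _)
  have hball : ∀ᶠ r in 𝓝[>] (0:ℝ), ∀ x ∈ msupp μ,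
      μ (closedBall x r) ^ q ≤ ENNReal.ofReal (r ^ (-1 : ℝ)) := by
    have hmem : Set.Ioo (0:ℝ) (min 1 (m + 1)⁻¹) ∈ 𝓝[>] (0:ℝ) :=
      Ioo_mem_nhdsGT (lt_min one_pos (by positivity))
    refine Filter.eventually_of_mem hmem ?_
    rintro r ⟨hr, hrlt⟩ x hx
    have h1 : μ (closedBall x r) ^ q ≤ (μ Set.univ) ^ q :=
      ENNReal.rpow_le_rpow (measure_mono (Set.subset_univ _)) hq
    have h3 : m ≤ r ^ (-1 : ℝ) := by
      rw [Real.rpow_neg_one]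
      have hrm : r < (m + 1)⁻¹ := lt_of_lt_of_le hrlt (min_le_right _ _)
      have h2 : (m + 1) * r < 1 := by
        have := mul_lt_mul_of_pos_left hrm (by positivity : (0:ℝ) < m + 1)
        rwa [mul_inv_cancel₀ (by positivity : (m + 1) ≠ 0)] at this
      have hmr : m * r ≤ 1 := by nlinarith
      calc m = m * r * r⁻¹ := by field_simp
        _ ≤ 1 * r⁻¹ := mul_le_mul_of_nonneg_right hmr (inv_pos.2 hr).le
        _ = r⁻¹ := one_mul _
    calc μ (closedBall x r) ^ q ≤ (μ Set.univ) ^ q := h1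
      _ = ENNReal.ofReal m := (ENNReal.ofReal_toReal hmne).symm
      _ ≤ ENNReal.ofReal (r ^ (-1 : ℝ)) := ENNReal.ofReal_le_ofReal h3
  have hge := tauLow_ge hμ hR hsub q (-1) hball
  intro hbot
  rw [hbot] at hge
  exact (EReal.coe_ne_bot _) (le_bot_iff.1 hge)

private lemma ev_lower [IsFiniteMeasure μ] {x₀ : Euc d} (hx₀ : x₀ ∈ msupp μ)
    (hL : Filter.limsup
      (fun r : ℝ => elog (⨅ x ∈ msupp μ, μ (closedBall x r)) * (((Real.log r)⁻¹ : ℝ) : EReal))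
      (𝓝[>] (0:ℝ)) < ⊤) :
    ∃ A : ℝ, ∀ᶠ r in 𝓝[>] (0:ℝ), ∀ x ∈ msupp μ,
      ENNReal.ofReal (r ^ A) ≤ μ (closedBall x r) := by
  set F := fun r : ℝ =>
    elog (⨅ x ∈ msupp μ, μ (closedBall x r)) * (((Real.log r)⁻¹ : ℝ) : EReal) with hF
  obtain ⟨c, hc1, hc2⟩ := exists_between hL
  have hcbot : c ≠ ⊥ := fun h => absurd (h ▸ hc1) (not_lt_bot)
  have hcA : c = ((c.toReal : ℝ) : EReal) := (EReal.coe_toReal hc2.ne hcbot).symm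
  set A : ℝ := c.toReal with hA
  have hAL : Filter.limsup F (𝓝[>] (0:ℝ)) < (A : EReal) := hcA ▸ hc1
  refine ⟨A, ((Filter.eventually_lt_of_limsup_lt hAL).and
    (Filter.eventually_of_mem (Ioo_mem_nhdsGT one_pos) fun r hr => hr)).mono ?_⟩
  rintro r ⟨hFr, hr, hr1⟩ x hx
  set I := ⨅ x ∈ msupp μ, μ (closedBall x r) with hI
  have hIle : I ≤ μ (closedBall x r) := iInf₂_le x hx
  have hlogr : Real.log r < 0 := Real.log_neg hr hr1
  have hinv : (Real.log r)⁻¹ < 0 := inv_lt_zero.2 hlogr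
  have hI0 : I ≠ 0 := by
    intro h0
    have : F r = (⊤ : EReal) := by
      rw [hF]
      simp only
      rw [← hI, h0, show elog 0 = (⊥ : EReal) by simp [elog], EReal.bot_mul_coe_of_neg hinv]
    rw [this] at hFr
    exact absurd hFr not_top_lt
  have hIt : I ≠ ⊤ := ne_top_of_le_ne_top (measure_ne_top μ _) hIle
  have hIpos : 0 < I.toReal := ENNReal.toReal_pos hI0 hIt
  have hFr' : Real.log I.toReal * (Real.log r)⁻¹ < A := by
    have heq : F r = ((Real.log I.toReal * (Real.log r)⁻¹ : ℝ) : EReal) := by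
      rw [hF]
      simp only
      rw [← hI, show elog I = ((Real.log I.toReal : ℝ) : EReal) by simp [elog, hI0, hIt],
        ← EReal.coe_mul]
    rw [heq] at hFr
    exact EReal.coe_lt_coe_iff.1 hFr
  have hlogI : A * Real.log r < Real.log I.toReal := by
    have h1 := mul_lt_mul_of_neg_right hFr' hlogr
    have h2 : Real.log I.toReal * (Real.log r)⁻¹ * Real.log r = Real.log I.toReal := by
      field_simp [hlogr.ne]
    rw [h2] at h1
    linarith
  have hrA : r ^ A ≤ I.toReal := by
    rw [Real.rpow_def_of_pos hr, ← Real.exp_log hIpos]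
    exact (Real.exp_le_exp.2 (by rw [mul_comm]; exact hlogI.le))
  exact le_trans (ENNReal.ofReal_le_of_le_toReal hrA) hIle

private lemma freq_small [IsFiniteMeasure μ] {x₀ : Euc d} (hx₀ : x₀ ∈ msupp μ)
    (hL : Filter.limsup
      (fun r : ℝ => elog (⨅ x ∈ msupp μ, μ (closedBall x r)) * (((Real.log r)⁻¹ : ℝ) : EReal))
      (𝓝[>] (0:ℝ)) = ⊤) (M : ℝ) :
    ∃ᶠ r in 𝓝[>] (0:ℝ), (0 < r ∧ r < 1) ∧
      ∃ x ∈ msupp μ, μ (closedBall x r) ≤ ENNReal.ofReal (r ^ M) := by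
  set F := fun r : ℝ =>
    elog (⨅ x ∈ msupp μ, μ (closedBall x r)) * (((Real.log r)⁻¹ : ℝ) : EReal) with hF
  have hfr : ∃ᶠ r in 𝓝[>] (0:ℝ), ((max M 0 + 1 : ℝ) : EReal) < F r :=
    Filter.frequently_lt_of_lt_limsup (by isBoundedDefault) (by rw [hL]; exact EReal.coe_lt_top _)
  refine ((hfr.and_eventually (Filter.eventually_of_mem (Ioo_mem_nhdsGT one_pos)
    fun r hr => hr)).mono ?_)
  rintro r ⟨hFr, hr, hr1⟩
  refine ⟨⟨hr, hr1⟩, ?_⟩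
  set I := ⨅ x ∈ msupp μ, μ (closedBall x r) with hI
  have hIt : I ≠ ⊤ := ne_top_of_le_ne_top (measure_ne_top μ _) (iInf₂_le x₀ hx₀)
  have hlogr : Real.log r < 0 := Real.log_neg hr hr1
  have hinv : (Real.log r)⁻¹ < 0 := inv_lt_zero.2 hlogr
  have hineq : I < ENNReal.ofReal (r ^ M) := by
    by_cases hI0 : I = 0
    · rw [hI0]; exact ENNReal.ofReal_pos.2 (Real.rpow_pos_of_pos hr M)
    · have hIpos : 0 < I.toReal := ENNReal.toReal_pos hI0 hIt
      have hFr' : (max M 0 + 1 : ℝ) < Real.log I.toReal * (Real.log r)⁻¹ := by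
        have heq : F r = ((Real.log I.toReal * (Real.log r)⁻¹ : ℝ) : EReal) := by
          rw [hF]
          simp only
          rw [← hI, show elog I = ((Real.log I.toReal : ℝ) : EReal) by simp [elog, hI0, hIt],
            ← EReal.coe_mul]
        rw [heq] at hFr
        exact EReal.coe_lt_coe_iff.1 hFr
      have h1 : Real.log I.toReal < (max M 0 + 1) * Real.log r := by
        have := mul_lt_mul_of_neg_right hFr' hlogr
        have h2 : Real.log I.toReal * (Real.log r)⁻¹ * Real.log r = Real.log I.toReal := by
          field_simp [hlogr.ne]
        rw [h2] at this
        linarith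
      have h3 : (max M 0 + 1) * Real.log r < M * Real.log r := by
        have hMlt : M < max M 0 + 1 := lt_of_le_of_lt (le_max_left M 0) (by linarith)
        have := mul_lt_mul_of_neg_right hMlt hlogr
        linarith
      have h4 : I.toReal < r ^ M := by
        rw [Real.rpow_def_of_pos hr, ← Real.exp_log hIpos]
        exact Real.exp_lt_exp.2 (by rw [mul_comm] at *; linarith)
      exact (ENNReal.lt_ofReal_iff_toReal_lt hIt).2 h4
  have hex : ∃ x, ∃ _ : x ∈ msupp μ, μ (closedBall x r) < ENNReal.ofReal (r ^ M) := by
    have := hI ▸ hineq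
    simpa only [iInf_lt_iff] using this
  obtain ⟨x, hx, hxlt⟩ := hex
  exact ⟨x, hx, hxlt.le⟩

private lemma tauLow_eq_bot_neg (hμ : McPlus μ) {x₀ : Euc d} (hx₀ : x₀ ∈ msupp μ)
    (hL : Filter.limsup
      (fun r : ℝ => elog (⨅ x ∈ msupp μ, μ (closedBall x r)) * (((Real.log r)⁻¹ : ℝ) : EReal))
      (𝓝[>] (0:ℝ)) = ⊤) {q : ℝ} (hq : q < 0) : tauLow μ q = ⊥ := by
  haveI : IsFiniteMeasure μ := hμ.1
  apply ereal_bot_of_forall_le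
  intro c
  have h := freq_small hx₀ hL (c / q)
  have h2 : ∃ᶠ r in 𝓝[>] (0:ℝ), ∃ x ∈ msupp μ,
      ENNReal.ofReal (r ^ ((c / q) * q)) ≤ μ (closedBall x r) ^ q := by
    refine h.mono ?_
    rintro r ⟨⟨hr, _⟩, x, hx, hle⟩
    refine ⟨x, hx, ?_⟩
    have hanti := rpow_anti hq.le hle
    calc ENNReal.ofReal (r ^ ((c / q) * q)) = ENNReal.ofReal ((r ^ (c / q)) ^ q) := by
          rw [← Real.rpow_mul hr.le]
      _ = ENNReal.ofReal (r ^ (c / q)) ^ q :=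
          (ENNReal.ofReal_rpow_of_pos (Real.rpow_pos_of_pos hr _)).symm
      _ ≤ μ (closedBall x r) ^ q := hanti
  have h3 := tauLow_le (μ := μ) q ((c / q) * q) h2
  rwa [div_mul_cancel₀ c hq.ne] at h3

private lemma eball_upper (hμ : McPlus μ) {a q₀ x : ℝ} (hq0 : q₀ ≠ 0)
    (hτ : tauLow μ q₀ = (x : EReal)) (hlt : a * q₀ < x) :
    ∀ᶠ r in 𝓝[>] (0:ℝ), (0 < r ∧ r < 1) ∧ ∀ y ∈ msupp μ,
      μ (closedBall y r) ^ q₀ ≤ ENNReal.ofReal (r ^ (a * q₀ + (x - a * q₀) / 2)) := by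
  haveI : IsFiniteMeasure μ := hμ.1
  obtain ⟨x₀, hx₀⟩ := msupp_nonempty hμ
  set v : ℝ := a * q₀ + (x - a * q₀) / 2 with hv
  have hvx : v < x := by rw [hv]; linarith
  have hlt' : ((v : ℝ) : EReal) < Filter.liminf
      (fun r : ℝ => elog (packSum μ q₀ r) * (((Real.log r)⁻¹ : ℝ) : EReal)) (𝓝[>] (0:ℝ)) := by
    show ((v : ℝ) : EReal) < tauLow μ q₀
    rw [hτ]
    exact EReal.coe_lt_coe_iff.2 hvx
  have hev := Filter.eventually_lt_of_lt_liminf hlt'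
  refine ((hev.and (Filter.eventually_of_mem (Ioo_mem_nhdsGT one_pos)
    fun r hr => hr)).mono ?_)
  rintro r ⟨hterm, hr, hr1⟩
  refine ⟨⟨hr, hr1⟩, ?_⟩
  intro y hy
  set S := packSum μ q₀ r with hS
  have hlogr : Real.log r < 0 := Real.log_neg hr hr1
  have hinv : (Real.log r)⁻¹ < 0 := inv_lt_zero.2 hlogr
  have hStop : S ≠ ⊤ := by
    intro htop
    rw [htop, show elog ⊤ = (⊤ : EReal) by simp [elog],
      EReal.top_mul_coe_of_neg hinv] at hterm
    exact absurd hterm not_lt_bot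
  have hSpos : 0 < S := packSum_pos hx₀ hr q₀
  have hterm' : v < Real.log S.toReal * (Real.log r)⁻¹ := by
    rw [show elog S = ((Real.log S.toReal : ℝ) : EReal) by simp [elog, hSpos.ne', hStop],
      ← EReal.coe_mul] at hterm
    exact EReal.coe_lt_coe_iff.1 hterm
  have hlogS : Real.log S.toReal < v * Real.log r := by
    have h1 := mul_lt_mul_of_neg_right hterm' hlogr
    have h2 : Real.log S.toReal * (Real.log r)⁻¹ * Real.log r = Real.log S.toReal := by
      field_simp [hlogr.ne]
    rw [h2] at h1
    linarith
  have hSle : S ≤ ENNReal.ofReal (r ^ v) := by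
    have hSR : S.toReal ≤ r ^ v := by
      rw [Real.rpow_def_of_pos hr, ← Real.exp_log (ENNReal.toReal_pos hSpos.ne' hStop)]
      exact Real.exp_le_exp.2 (by rw [mul_comm]; exact hlogS.le)
    exact (ENNReal.le_ofReal_iff_toReal_le hStop (Real.rpow_pos_of_pos hr v).le).2 hSR
  exact (single_le_packSum hy q₀ r).trans hSle

private lemma eLegendre_mem_le {a t : ℝ} {L : ℝ}
    (hτ : ((L : ℝ) : EReal) ≤ tauLow μ t) :
    eLegendre (tauLow μ) (a : EReal) ≤ ((a * t - L : ℝ) : EReal) := by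
  have hne : tauLow μ t ≠ ⊥ := by
    intro hb
    rw [hb] at hτ
    exact (EReal.coe_ne_bot _) (le_bot_iff.1 hτ)
  have hmem : ((a : EReal) * (t : ℝ) - tauLow μ t) ∈
      {v : EReal | ∃ q : ℝ, tauLow μ q ≠ ⊥ ∧ ((a : EReal) = ⊤ → q ≤ 0) ∧
        v = (a : EReal) * (q : ℝ) - tauLow μ q} :=
    ⟨t, hne, fun h => absurd h (EReal.coe_ne_top a), rfl⟩
  have hle : (a : EReal) * ((t : ℝ) : EReal) - tauLow μ t ≤ ((a * t - L : ℝ) : EReal) := by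
    rw [EReal.coe_sub, ← EReal.coe_mul]
    exact EReal.sub_le_sub (le_refl _) hτ
  exact le_trans (sInf_le hmem) hle

private lemma eLegendre_bot_pos (hμ : McPlus μ) {R : ℝ} (hR : 0 ≤ R)
    (hsub : msupp μ ⊆ closedBall 0 R) {a q₀ x : ℝ} (hq : 0 < q₀)
    (hτ : tauLow μ q₀ = (x : EReal)) (hlt : a * q₀ < x) :
    eLegendre (tauLow μ) (a : EReal) = ⊥ := by
  haveI : IsFiniteMeasure μ := hμ.1
  set ε : ℝ := (x - a * q₀) / 2 with hε
  have hεpos : 0 < ε := by rw [hε]; linarith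
  set δ : ℝ := ε / q₀ with hδ
  have hδpos : 0 < δ := div_pos hεpos hq
  have hup := eball_upper hμ hq.ne' hτ hlt
  have hball : ∀ᶠ r in 𝓝[>] (0:ℝ), (0 < r ∧ r < 1) ∧ ∀ y ∈ msupp μ,
      μ (closedBall y r) ≤ ENNReal.ofReal (r ^ (a + δ)) := by
    refine hup.mono ?_
    rintro r ⟨⟨hr, hr1⟩, hb⟩
    refine ⟨⟨hr, hr1⟩, fun y hy => ?_⟩
    have h1 := ENNReal.rpow_le_rpow (hb y hy) (le_of_lt (inv_pos.2 hq))
    calc μ (closedBall y r) = (μ (closedBall y r) ^ q₀) ^ q₀⁻¹ := by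
          rw [← ENNReal.rpow_mul, mul_inv_cancel₀ hq.ne', ENNReal.rpow_one]
      _ ≤ ENNReal.ofReal (r ^ (a * q₀ + ε)) ^ q₀⁻¹ := h1
      _ = ENNReal.ofReal ((r ^ (a * q₀ + ε)) ^ q₀⁻¹) :=
          ENNReal.ofReal_rpow_of_pos (Real.rpow_pos_of_pos hr _)
      _ = ENNReal.ofReal (r ^ (a + δ)) := by
          rw [← Real.rpow_mul hr.le]
          congr 1
          rw [hδ]
          field_simp
          try ring
  have htau : ∀ t : ℝ, 0 < t → (((a + δ) * t - d - 1 : ℝ) : EReal) ≤ tauLow μ t := by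
    intro t ht
    apply tauLow_ge hμ hR hsub t ((a + δ) * t)
    refine hball.mono ?_
    rintro r ⟨⟨hr, hr1⟩, hb⟩ y hy
    calc μ (closedBall y r) ^ t ≤ ENNReal.ofReal (r ^ (a + δ)) ^ t :=
          ENNReal.rpow_le_rpow (hb y hy) ht.le
      _ = ENNReal.ofReal ((r ^ (a + δ)) ^ t) :=
          ENNReal.ofReal_rpow_of_pos (Real.rpow_pos_of_pos hr _)
      _ = ENNReal.ofReal (r ^ ((a + δ) * t)) := by rw [← Real.rpow_mul hr.le]
  apply ereal_bot_of_forall_le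
  intro c
  set t : ℝ := max 1 ((d + 1 - c) / δ + 1) with htdef
  have ht : 0 < t := lt_of_lt_of_le one_pos (le_max_left _ _)
  have htc : a * t - ((a + δ) * t - d - 1) ≤ c := by
    have h1 : (d + 1 - c) / δ + 1 ≤ t := le_max_right _ _
    have h2 : (d + 1 - c) / δ ≤ t - 1 := by linarith
    have h3 : d + 1 - c ≤ δ * (t - 1) := by
      rw [div_le_iff₀ hδpos] at h2
      linarith [h2]
    nlinarith [hδpos, h3]
  refine le_trans (eLegendre_mem_le (htau t ht)) ?_
  exact EReal.coe_le_coe_iff.2 htc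

private lemma eLegendre_bot_neg (hμ : McPlus μ) {R : ℝ} (hR : 0 ≤ R)
    (hsub : msupp μ ⊆ closedBall 0 R) {a q₀ x : ℝ} (hq : q₀ < 0)
    (hτ : tauLow μ q₀ = (x : EReal)) (hlt : a * q₀ < x) :
    eLegendre (tauLow μ) (a : EReal) = ⊥ := by
  haveI : IsFiniteMeasure μ := hμ.1
  set ε : ℝ := (x - a * q₀) / 2 with hε
  have hεpos : 0 < ε := by rw [hε]; linarith
  set δ : ℝ := -(ε / q₀) with hδ
  have hδpos : 0 < δ := by
    rw [hδ]
    have := div_neg_of_pos_of_neg hεpos hq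
    linarith
  have hup := eball_upper hμ hq.ne hτ hlt
  have hball : ∀ᶠ r in 𝓝[>] (0:ℝ), (0 < r ∧ r < 1) ∧ ∀ y ∈ msupp μ,
      ENNReal.ofReal (r ^ (a - δ)) ≤ μ (closedBall y r) := by
    refine hup.mono ?_
    rintro r ⟨⟨hr, hr1⟩, hb⟩
    refine ⟨⟨hr, hr1⟩, fun y hy => ?_⟩
    have h1 := rpow_anti (le_of_lt (inv_lt_zero.2 hq)) (hb y hy)
    calc ENNReal.ofReal (r ^ (a - δ))
        = ENNReal.ofReal ((r ^ (a * q₀ + ε)) ^ q₀⁻¹) := by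
          rw [← Real.rpow_mul hr.le]
          congr 1
          rw [hδ]
          field_simp [hq.ne]
          try ring
      _ = ENNReal.ofReal (r ^ (a * q₀ + ε)) ^ q₀⁻¹ :=
          (ENNReal.ofReal_rpow_of_pos (Real.rpow_pos_of_pos hr _)).symm
      _ ≤ (μ (closedBall y r) ^ q₀) ^ q₀⁻¹ := h1
      _ = μ (closedBall y r) := by
          rw [← ENNReal.rpow_mul, mul_inv_cancel₀ hq.ne, ENNReal.rpow_one]
  have htau : ∀ t : ℝ, t < 0 → (((a - δ) * t - d - 1 : ℝ) : EReal) ≤ tauLow μ t := by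
    intro t ht
    apply tauLow_ge hμ hR hsub t ((a - δ) * t)
    refine hball.mono ?_
    rintro r ⟨⟨hr, hr1⟩, hb⟩ y hy
    calc μ (closedBall y r) ^ t ≤ ENNReal.ofReal (r ^ (a - δ)) ^ t :=
          rpow_anti ht.le (hb y hy)
      _ = ENNReal.ofReal ((r ^ (a - δ)) ^ t) :=
          ENNReal.ofReal_rpow_of_pos (Real.rpow_pos_of_pos hr _)
      _ = ENNReal.ofReal (r ^ ((a - δ) * t)) := by rw [← Real.rpow_mul hr.le]
  apply ereal_bot_of_forall_le
  intro c
  set t : ℝ := min (-1) ((c - d - 1) / δ - 1) with htdef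
  have ht : t < 0 := lt_of_le_of_lt (min_le_left _ _) (by norm_num)
  have htc : a * t - ((a - δ) * t - d - 1) ≤ c := by
    have h1 : t ≤ (c - d - 1) / δ - 1 := min_le_right _ _
    have h2 : t + 1 ≤ (c - d - 1) / δ := by linarith
    have h3 : δ * (t + 1) ≤ c - d - 1 := by
      rw [← le_div_iff₀' hδpos]
      exact h2
    nlinarith [hδpos, h3]
  refine le_trans (eLegendre_mem_le (htau t ht)) ?_
  exact EReal.coe_le_coe_iff.2 htc

end StatementThreeHelpers
/-- Proposition 1.3(2): characterization of the domain of `τ_μ`,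
and non-negativity of `τ_μ*` on its domain. -/
theorem statement3 (d : ℕ) (hd : 1 ≤ d) (μ : Measure (Euc d)) (hμ : McPlus μ) :
    (∀ L : EReal,
      L = Filter.limsup
          (fun r : ℝ => elog (⨅ x ∈ msupp μ, μ (closedBall x r)) * (((Real.log r)⁻¹ : ℝ) : EReal))
          (𝓝[>] (0:ℝ)) →
      (L < ⊤ → {q : ℝ | tauLow μ q ≠ ⊥} = Set.univ) ∧
      (¬ L < ⊤ → {q : ℝ | tauLow μ q ≠ ⊥} = Set.Ici 0)) ∧
    (∀ α : EReal, eLegendre (tauLow μ) α ≠ ⊥ → 0 ≤ eLegendre (tauLow μ) α) := by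
  haveI : IsFiniteMeasure μ := hμ.1
  obtain ⟨R, hR, hsub⟩ := msupp_bdd hμ
  obtain ⟨x₀, hx₀⟩ := msupp_nonempty hμ
  constructor
  · intro L hL
    constructor
    · intro hLlt
      rw [hL] at hLlt
      obtain ⟨A, hA⟩ := ev_lower hx₀ hLlt
      apply Set.eq_univ_of_forall
      intro q
      show tauLow μ q ≠ ⊥
      rcases le_or_gt 0 q with hq | hq
      · exact tauLow_ne_bot_nonneg hμ hR hsub hq
      · have hball : ∀ᶠ r in 𝓝[>] (0:ℝ), ∀ y ∈ msupp μ,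
            μ (closedBall y r) ^ q ≤ ENNReal.ofReal (r ^ (A * q)) := by
          refine ((hA.and (Filter.eventually_of_mem (Ioo_mem_nhdsGT one_pos)
            fun r hr => hr)).mono ?_)
          rintro r ⟨hb, hr, hr1⟩ y hy
          calc μ (closedBall y r) ^ q ≤ ENNReal.ofReal (r ^ A) ^ q :=
                rpow_anti hq.le (hb y hy)
            _ = ENNReal.ofReal ((r ^ A) ^ q) :=
                ENNReal.ofReal_rpow_of_pos (Real.rpow_pos_of_pos hr _)
            _ = ENNReal.ofReal (r ^ (A * q)) := by rw [← Real.rpow_mul hr.le]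
        have hge := tauLow_ge hμ hR hsub q (A * q) hball
        intro hbot
        rw [hbot] at hge
        exact (EReal.coe_ne_bot _) (le_bot_iff.1 hge)
    · intro hnlt
      rw [hL] at hnlt
      have hLtop := top_le_iff.1 (not_lt.1 hnlt)
      ext q
      simp only [Set.mem_setOf_eq, Set.mem_Ici]
      constructor
      · intro hne
        by_contra hq
        push_neg at hq
        exact hne (tauLow_eq_bot_neg hμ hx₀ hLtop hq)
      · intro hq
        exact tauLow_ne_bot_nonneg hμ hR hsub hq
  · intro α hα
    have hτ0 := tauLow_zero_le hμ
    refine le_sInf ?_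
    rintro v ⟨q, hτq, hqtop, rfl⟩
    have hmem : (α * (q : ℝ) - tauLow μ q) ∈
        {v : EReal | ∃ q : ℝ, tauLow μ q ≠ ⊥ ∧ (α = ⊤ → q ≤ 0) ∧
          v = α * (q : ℝ) - tauLow μ q} := ⟨q, hτq, hqtop, rfl⟩
    have hvne : α * (q : ℝ) - tauLow μ q ≠ ⊥ := by
      intro hb
      exact hα (le_bot_iff.1 (hb ▸ sInf_le hmem))
    rcases ereal_cases α with hαb | ⟨a, hαa⟩ | hαt
    · subst hαb
      rcases lt_trichotomy q 0 with hq | hq | hq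
      · rcases ereal_cases (tauLow μ q) with hτb | ⟨y, hτ⟩ | hτt
        · exact absurd hτb hτq
        · rw [EReal.bot_mul_coe_of_neg hq, hτ, EReal.top_sub_coe]
          exact le_top
        · exfalso
          apply hvne
          rw [EReal.bot_mul_coe_of_neg hq, hτt]
          rw [sub_eq_add_neg]
          simp
      · subst hq
        rw [EReal.coe_zero, mul_zero, zero_sub, ← neg_zero]
        exact EReal.neg_le_neg_iff.2 hτ0
      · exfalso
        apply hvne
        rw [EReal.bot_mul_coe_of_pos hq, EReal.bot_sub]
    · subst hαa
      rcases ereal_cases (tauLow μ q) with hτb | ⟨y, hτ⟩ | hτt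
      · exact absurd hτb hτq
      · rw [hτ, ← EReal.coe_mul, ← EReal.coe_sub]
        by_contra hneg
        have hlt : a * q < y := by
          by_contra hge
          push_neg at hge
          exact hneg (by exact_mod_cast sub_nonneg.2 hge)
        rcases lt_trichotomy q 0 with hq | hq | hq
        · exact hα (eLegendre_bot_neg hμ hR hsub hq hτ hlt)
        · subst hq
          have hy0 : y ≤ 0 := by
            have := hτ ▸ hτ0
            exact_mod_cast this
          rw [mul_zero] at hlt
          linarith
        · exact hα (eLegendre_bot_pos hμ hR hsub hq hτ hlt)
      · exfalso
        apply hvne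
        rw [hτt, EReal.sub_top]
    · subst hαt
      rcases (hqtop rfl).lt_or_eq with hq | hq
      · exfalso
        apply hvne
        rw [EReal.top_mul_coe_of_neg hq, EReal.bot_sub]
      · subst hq
        rw [EReal.coe_zero, mul_zero, zero_sub, ← neg_zero]
        exact EReal.neg_le_neg_iff.2 hτ0

end
end

section
/- Let d ≥ 1 and let τ : ℝ → ℝ∪{−∞} satisfy the necessary properties of an L^q-spectrum in dimension d, with dom(τ) = [0,∞), τ(0) < 0, and τ continuous at 0⁺ (i.e. lim_{q→0⁺} τ(q) = τ(0)). Set τ'(∞) = lim_{q→+∞} τ(q)/q and let τ'(0⁺) ∈ (0,∞] be the right derivative of τ at 0. Then: τ*(∞) = −τ(0); {α ∈ ℝ∪{∞} : τ*(α) > −∞} = [τ'(∞), ∞]∪{∞}, i.e. the interval [τ'(∞),∞]; τ* is concave, continuous and non-decreasing on [τ'(∞),∞), increasing on [τ'(∞), τ'(0⁺)); if τ'(0⁺) < ∞ then τ*(α) = −τ(0) for every α ∈ [τ'(0⁺),∞); and τ* is continuous at ∞, i.e. lim_{α→∞} τ*(α) = τ*(∞) = −τ(0). -/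
open MeasureTheory Metric Set Filter Topology
open scoped ENNReal NNReal

noncomputable section

namespace Stmt6Aux

def Fr (t : ℝ → ℝ) (α : ℝ) : ℝ := sInf ((fun q => α * q - t q) '' Set.Ici 0)

structure Hyp (t : ℝ → ℝ) (a : ℝ) : Prop where
  mono : ∀ ⦃q₁ q₂ : ℝ⦄, 0 ≤ q₁ → q₁ ≤ q₂ → t q₁ ≤ t q₂
  one : t 1 = 0
  zero : t 0 < 0
  lim : Tendsto (fun q => t q / q) atTop (𝓝 a)
  le_lin : ∀ q : ℝ, 0 ≤ q → t q ≤ a * q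
  cont : Tendsto t (𝓝[>] (0:ℝ)) (𝓝 (t 0))

variable {t : ℝ → ℝ} {a : ℝ}

lemma a_nonneg' (hmono : ∀ ⦃q₁ q₂ : ℝ⦄, 0 ≤ q₁ → q₁ ≤ q₂ → t q₁ ≤ t q₂) (hone : t 1 = 0)
    (hlim : Tendsto (fun q => t q / q) atTop (𝓝 a)) : 0 ≤ a := by
  have hev : ∀ᶠ q in atTop, 0 ≤ t q / q := by
    filter_upwards [eventually_ge_atTop (1:ℝ)] with q hq
    have h1 : t 1 ≤ t q := hmono zero_le_one hq
    rw [hone] at h1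
    exact div_nonneg h1 (by linarith)
  exact ge_of_tendsto hlim hev

lemma a_nonneg (h : Hyp t a) : 0 ≤ a := a_nonneg' h.mono h.one h.lim

lemma bounded_below_gt (hmono : ∀ ⦃q₁ q₂ : ℝ⦄, 0 ≤ q₁ → q₁ ≤ q₂ → t q₁ ≤ t q₂)
    (hone : t 1 = 0) (hlim : Tendsto (fun q => t q / q) atTop (𝓝 a)) {α : ℝ} (hα : a < α) :
    ∃ m : ℝ, ∀ q : ℝ, 0 ≤ q → m ≤ α * q - t q := by
  have hev : ∀ᶠ q in atTop, t q / q < (a + α) / 2 :=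
    hlim.eventually (eventually_lt_nhds (by linarith : a < (a + α)/2))
  obtain ⟨Q, hQ⟩ := hev.exists_forall_of_atTop
  set Q' := max Q 1 with hQ'
  refine ⟨min (-(t Q')) 0, fun q hq => ?_⟩
  have hα0 : 0 ≤ α := le_trans (a_nonneg' hmono hone hlim) hα.le
  rcases le_or_gt q Q' with hcase | hcase
  · have h1 : t q ≤ t Q' := hmono hq hcase
    have h2 : 0 ≤ α * q := mul_nonneg hα0 hq
    have := min_le_left (-(t Q')) 0
    linarith
  · have hQ1 : (1:ℝ) ≤ Q' := le_max_right _ _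
    have hq0 : 0 < q := by linarith
    have h1 : t q / q < (a + α) / 2 := hQ q (le_trans (le_max_left _ _) hcase.le)
    have h2 : t q < (a + α) / 2 * q := by rw [div_lt_iff₀ hq0] at h1; linarith
    have h3 : 0 ≤ (α - a) / 2 * q := mul_nonneg (by linarith) hq0.le
    have := min_le_right (-(t Q')) 0
    nlinarith

lemma exists_small_val (hlim : Tendsto (fun q => t q / q) atTop (𝓝 a)) {α : ℝ} (hα : α < a)
    (M : ℝ) : ∃ q : ℝ, 0 ≤ q ∧ α * q - t q < M := by
  have hev : ∀ᶠ q in atTop, (α + a) / 2 < t q / q :=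
    hlim.eventually (eventually_gt_nhds (by linarith : (α + a)/2 < a))
  obtain ⟨Q, hQ⟩ := hev.exists_forall_of_atTop
  refine ⟨max Q (max 1 (2 * M / (α - a) + 1)), ?_, ?_⟩
  · exact le_trans zero_le_one (le_trans (le_max_left _ _) (le_max_right _ _))
  · set q := max Q (max 1 (2 * M / (α - a) + 1)) with hq
    have hq1 : 1 ≤ q := le_trans (le_max_left _ _) (le_max_right _ _)
    have hq0 : 0 < q := by linarith
    have hqQ : Q ≤ q := le_max_left _ _
    have hqM : 2 * M / (α - a) + 1 ≤ q := le_trans (le_max_right _ _) (le_max_right _ _)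
    have h1 : (α + a) / 2 < t q / q := hQ q hqQ
    have h2 : (α + a) / 2 * q < t q := by rw [lt_div_iff₀ hq0] at h1; linarith
    have hc : α - a < 0 := by linarith
    have h3 : (α - a) / 2 * q ≤ (α - a) / 2 * (2 * M / (α - a) + 1) :=
      mul_le_mul_of_nonpos_left hqM (by linarith)
    have hne : α - a ≠ 0 := ne_of_lt hc
    have h4 : (α - a) / 2 * (2 * M / (α - a) + 1) = M + (α - a) / 2 := by
      field_simp
    nlinarith

lemma quot_noninc
    (hconc : ∀ q₁ q₂ s : ℝ, 0 ≤ q₁ → 0 ≤ q₂ → 0 ≤ s → s ≤ 1 →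
      s * t q₁ + (1 - s) * t q₂ ≤ t (s * q₁ + (1 - s) * q₂))
    {q₁ q₂ : ℝ} (h1 : 0 < q₁) (h12 : q₁ ≤ q₂) :
    (t q₂ - t 0) * q₂⁻¹ ≤ (t q₁ - t 0) * q₁⁻¹ := by
  have hq₂ : 0 < q₂ := lt_of_lt_of_le h1 h12
  set s := q₁ / q₂ with hs
  have hs0 : 0 ≤ s := div_nonneg h1.le hq₂.le
  have hs1 : s ≤ 1 := by rw [hs, div_le_one hq₂]; exact h12
  have hne : q₂ ≠ 0 := ne_of_gt hq₂
  have hs' : s * q₂ = q₁ := by rw [hs]; field_simp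
  have hid : s * q₂ + (1 - s) * 0 = q₁ := by rw [mul_zero, add_zero]; exact hs'
  have conc := hconc q₂ 0 s hq₂.le le_rfl hs0 hs1
  rw [hid] at conc
  have c2 : s * q₂ * t q₂ + (q₂ - s * q₂) * t 0 ≤ t q₁ * q₂ := by
    nlinarith [mul_le_mul_of_nonneg_right conc hq₂.le]
  rw [hs'] at c2
  rw [← div_eq_mul_inv, ← div_eq_mul_inv, div_le_div_iff₀ hq₂ h1]
  nlinarith [c2]

lemma Sne (t : ℝ → ℝ) (α : ℝ) : ((fun q => α * q - t q) '' Set.Ici 0).Nonempty :=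
  ⟨α * 0 - t 0, 0, self_mem_Ici, rfl⟩

lemma Slb (h : Hyp t a) {α : ℝ} (hα : a ≤ α) :
    ∀ v ∈ (fun q => α * q - t q) '' Set.Ici 0, (0:ℝ) ≤ v := by
  rintro v ⟨q, hq, rfl⟩
  have h1 := h.le_lin q hq
  have h2 : a * q ≤ α * q := mul_le_mul_of_nonneg_right hα hq
  simp only; linarith

lemma Sbdd (h : Hyp t a) {α : ℝ} (hα : a ≤ α) :
    BddBelow ((fun q => α * q - t q) '' Set.Ici 0) :=
  ⟨0, fun v hv => Slb h hα v hv⟩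

lemma Fr_nonneg (h : Hyp t a) {α : ℝ} (hα : a ≤ α) : 0 ≤ Fr t α :=
  le_csInf (Sne t α) (Slb h hα)

lemma Fr_le (h : Hyp t a) {α : ℝ} (hα : a ≤ α) {q : ℝ} (hq : 0 ≤ q) :
    Fr t α ≤ α * q - t q :=
  csInf_le (Sbdd h hα) ⟨q, hq, rfl⟩

lemma Fr_le_zero (h : Hyp t a) {α : ℝ} (hα : a ≤ α) : Fr t α ≤ -t 0 := by
  have := Fr_le h hα le_rfl
  simpa using this

lemma Fr_mono (h : Hyp t a) {α₁ α₂ : ℝ} (h1 : a ≤ α₁) (h12 : α₁ ≤ α₂) :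
    Fr t α₁ ≤ Fr t α₂ := by
  refine le_csInf (Sne t α₂) ?_
  rintro v ⟨q, hq, rfl⟩
  have := Fr_le h h1 hq
  have h2 : α₁ * q ≤ α₂ * q := mul_le_mul_of_nonneg_right h12 hq
  simp only; linarith

lemma Fr_concave (h : Hyp t a) {α₁ α₂ s : ℝ} (h1 : a ≤ α₁) (h2 : a ≤ α₂)
    (hs0 : 0 ≤ s) (hs1 : s ≤ 1) :
    s * Fr t α₁ + (1 - s) * Fr t α₂ ≤ Fr t (s * α₁ + (1 - s) * α₂) := by
  refine le_csInf (Sne t _) ?_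
  rintro v ⟨q, hq, rfl⟩
  have e1 : s * Fr t α₁ ≤ s * (α₁ * q - t q) :=
    mul_le_mul_of_nonneg_left (Fr_le h h1 hq) hs0
  have e2 : (1 - s) * Fr t α₂ ≤ (1 - s) * (α₂ * q - t q) :=
    mul_le_mul_of_nonneg_left (Fr_le h h2 hq) (by linarith)
  simp only; nlinarith

lemma Fr_exists_near (h : Hyp t a) {α : ℝ} (hα : a ≤ α) {ε : ℝ} (hε : 0 < ε) :
    ∃ q : ℝ, 0 ≤ q ∧ α * q - t q < Fr t α + ε := by
  obtain ⟨v, ⟨q, hq, rfl⟩, hlt⟩ := exists_lt_of_csInf_lt (Sne t α)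
    (by linarith : Fr t α < Fr t α + ε)
  exact ⟨q, hq, hlt⟩

lemma small_q (h : Hyp t a) {ε : ℝ} (hε : 0 < ε) :
    ∃ δ > 0, ∀ q : ℝ, 0 ≤ q → q < δ → t q < t 0 + ε := by
  obtain ⟨δ, hδ, hd⟩ := Metric.tendsto_nhdsWithin_nhds.1 h.cont ε hε
  refine ⟨δ, hδ, fun q hq0 hqδ => ?_⟩
  rcases eq_or_lt_of_le hq0 with rfl | hq0'
  · linarith
  · have := hd (mem_Ioi.2 hq0')
      (by rw [Real.dist_eq]; rw [abs_of_pos (by linarith : (0:ℝ) < q - 0)] at *; simpa using hqδ)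
    rw [Real.dist_eq, abs_lt] at this
    linarith [this.1, this.2]

lemma Fr_strictmono (h : Hyp t a) {α₁ α₂ : ℝ} (h1 : a ≤ α₁) (h12 : α₁ < α₂)
    (hlt : Fr t α₁ < -t 0) : Fr t α₁ < Fr t α₂ := by
  set η := -t 0 - Fr t α₁ with hη
  have hη0 : 0 < η := by simp only [hη]; linarith
  obtain ⟨δ, hδ0, hδ⟩ := small_q h (half_pos hη0)
  have key : ∀ v ∈ (fun q => α₂ * q - t q) '' Set.Ici 0,
      Fr t α₁ + min (η/2) ((α₂ - α₁) * δ) ≤ v := by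
    rintro v ⟨q, hq, rfl⟩
    simp only
    rcases lt_or_ge q δ with hqδ | hqδ
    · have ht := hδ q hq hqδ
      have hα2 : 0 ≤ α₂ := le_trans (a_nonneg h) (le_trans h1 h12.le)
      have : -t q > -t 0 - η/2 := by linarith
      have hm : min (η/2) ((α₂ - α₁) * δ) ≤ η/2 := min_le_left _ _
      nlinarith [mul_nonneg hα2 hq]
    · have := Fr_le h h1 hq
      have hm : min (η/2) ((α₂ - α₁) * δ) ≤ (α₂ - α₁) * δ := min_le_right _ _
      nlinarith [mul_le_mul_of_nonneg_left hqδ (by linarith : (0:ℝ) ≤ α₂ - α₁)]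
  have := le_csInf (Sne t α₂) key
  have hpos : 0 < min (η/2) ((α₂ - α₁) * δ) :=
    lt_min (half_pos hη0) (mul_pos (by linarith) hδ0)
  calc Fr t α₁ < Fr t α₁ + min (η/2) ((α₂ - α₁) * δ) := by linarith
    _ ≤ Fr t α₂ := this

lemma Fr_lt_top (h : Hyp t a) {α c q₀ : ℝ} (hα : a ≤ α) (hq₀ : 0 < q₀)
    (hc : t 0 + c * q₀ ≤ t q₀) (hαc : α < c) : Fr t α < -t 0 := by
  have := Fr_le h hα hq₀.le
  nlinarith

lemma Fr_eq_neg_t0 (h : Hyp t a) {α b : ℝ}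
    (hb : ∀ q : ℝ, 0 < q → t q - t 0 ≤ b * q) (hba : b ≤ α) (hαa : a ≤ α) :
    Fr t α = -t 0 := by
  refine le_antisymm (Fr_le_zero h hαa) (le_csInf (Sne t α) ?_)
  rintro v ⟨q, hq, rfl⟩
  simp only
  rcases eq_or_lt_of_le (show (0:ℝ) ≤ q from hq) with rfl | hq'
  · simp
  · have h1 := hb q hq'
    nlinarith

lemma Fr_tendsto (h : Hyp t a) : Tendsto (Fr t) atTop (𝓝 (-t 0)) := by
  rw [Metric.tendsto_atTop]
  intro ε hε
  obtain ⟨δ, hδ0, hδ⟩ := small_q h (half_pos hε)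
  refine ⟨a + max 1 ((-t 0) / (δ/2)), fun α hα => ?_⟩
  have hαa : a ≤ α := le_trans (le_add_of_nonneg_right (le_trans zero_le_one (le_max_left _ _))) hα
  have hup : Fr t α ≤ -t 0 := Fr_le_zero h hαa
  have hlow : -t 0 - ε/2 ≤ Fr t α := by
    refine le_csInf (Sne t α) ?_
    rintro v ⟨q, hq, rfl⟩
    simp only
    rcases lt_or_ge q (δ/2) with hqδ | hqδ
    · have ht := hδ q hq (by linarith)
      have hα0 : 0 ≤ α := le_trans (a_nonneg h) hαa
      nlinarith [mul_nonneg hα0 hq]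
    · have h1 := h.le_lin q hq
      have h2 : (-t 0) / (δ/2) ≤ α - a := by
        have := le_max_right (1:ℝ) ((-t 0)/(δ/2)); linarith
      have h3 : 0 < δ/2 := by linarith
      have h4 : -t 0 ≤ (α - a) * (δ/2) := by
        rw [div_le_iff₀ h3] at h2; linarith
      have h5 : (α - a) * (δ/2) ≤ (α - a) * q := by
        apply mul_le_mul_of_nonneg_left hqδ
        have h6 : (0:ℝ) < (-t 0) / (δ/2) := div_pos (by linarith [h.zero]) h3
        linarith
      nlinarith
  rw [Real.dist_eq, abs_lt]
  constructor <;> linarith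

lemma Fr_continuousOn (h : Hyp t a) : ContinuousOn (Fr t) (Set.Ici a) := by
  intro α₀ hα₀'
  have hα₀ : a ≤ α₀ := hα₀'
  rw [Metric.continuousWithinAt_iff]
  intro ε hε
  obtain ⟨q₀, hq₀, hnear⟩ := Fr_exists_near h hα₀ (half_pos hε)
  set δ₁ := ε / (2 * (q₀ + 1)) with hδ₁def
  have hδ₁0 : 0 < δ₁ := by positivity
  have heq₁ : δ₁ * (2 * (q₀ + 1)) = ε := by
    rw [hδ₁def]; field_simp
  have hupper : ∀ α : ℝ, a ≤ α → |α - α₀| < δ₁ → Fr t α < Fr t α₀ + ε := by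
    intro α hαa hd
    have h1 : Fr t α ≤ α * q₀ - t q₀ := Fr_le h hαa hq₀
    have h2 : (α - α₀) * q₀ ≤ |α - α₀| * q₀ := mul_le_mul_of_nonneg_right (le_abs_self _) hq₀
    have h3 : |α - α₀| * q₀ ≤ δ₁ * q₀ := mul_le_mul_of_nonneg_right hd.le hq₀
    nlinarith
  rcases eq_or_lt_of_le hα₀ with rfl | hα₀lt
  · refine ⟨δ₁, hδ₁0, fun α hαa hd => ?_⟩
    rw [Real.dist_eq] at hd ⊢
    have hl : Fr t a ≤ Fr t α := Fr_mono h le_rfl hαa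
    have hu := hupper α hαa hd
    rw [abs_lt]; constructor <;> linarith
  · set C := Fr t α₀ - Fr t a with hC
    have hC0 : 0 ≤ C := by
      have := Fr_mono h le_rfl hα₀; simp only [hC]; linarith
    set δ₂ := ε * (α₀ - a) / (C + 1) with hδ₂def
    have hδ₂0 : 0 < δ₂ := by
      apply div_pos (mul_pos hε (by linarith)) (by linarith)
    have heq₂ : δ₂ * (C + 1) = ε * (α₀ - a) := by
      rw [hδ₂def]; field_simp
    refine ⟨min δ₁ δ₂, lt_min hδ₁0 hδ₂0, fun α hαa hd => ?_⟩
    have hαa' : a ≤ α := hαa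
    rw [Real.dist_eq] at hd ⊢
    have hd1 : |α - α₀| < δ₁ := lt_of_lt_of_le hd (min_le_left _ _)
    have hd2 : |α - α₀| < δ₂ := lt_of_lt_of_le hd (min_le_right _ _)
    have hu := hupper α hαa hd1
    have hlow : Fr t α₀ - ε < Fr t α := by
      rcases le_or_gt α₀ α with hcase | hcase
      · have := Fr_mono h hα₀ hcase; linarith
      · set s := (α₀ - α) / (α₀ - a) with hs
        have hden : 0 < α₀ - a := by linarith
        have hs0' : 0 ≤ s := div_nonneg (by linarith) hden.le
        have hs1 : s ≤ 1 := by
          rw [hs, div_le_one hden]; linarith [hαa']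
        have hid : s * a + (1 - s) * α₀ = α := by
          rw [hs]; field_simp; ring
        have conc := Fr_concave h le_rfl hα₀ hs0' hs1
        rw [hid] at conc
        have hs' : s * (α₀ - a) = α₀ - α := by rw [hs]; field_simp
        have e1 : s * (α₀ - a) < δ₂ := by
          rw [hs']
          calc α₀ - α ≤ |α - α₀| := by rw [abs_sub_comm]; exact le_abs_self _
            _ < δ₂ := hd2
        have e2 : s * (α₀ - a) * (C + 1) < δ₂ * (C + 1) :=
          mul_lt_mul_of_pos_right e1 (by linarith)
        rw [heq₂] at e2
        have e3 : s * (C + 1) < ε := by nlinarith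
        have e4 : s * C < ε := by nlinarith
        nlinarith
    rw [abs_lt]; constructor <;> linarith

end Stmt6Aux

open Stmt6Aux

/-- Proposition 1.4(2)(b): structure of `τ*` when `dom τ = [0,∞)`,
`τ(0) < 0` and `τ` is continuous at `0⁺`. -/
theorem statement6 (d : ℕ) (hd : 1 ≤ d) (τ : ℝ → EReal) (hτ : IsLqSpec d τ)
    (hdom : {q : ℝ | τ q ≠ ⊥} = Set.Ici 0) (h0 : τ 0 < 0)
    (hcont : Filter.Tendsto τ (𝓝[>] (0:ℝ)) (𝓝 (τ 0)))
    (a : ℝ) (ha : Filter.Tendsto (fun q : ℝ => (τ q).toReal / q) atTop (𝓝 a))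
    (B : EReal) (hBpos : 0 < B)
    (hB : Filter.Tendsto (fun q : ℝ => (τ q - τ 0) * (((q⁻¹ : ℝ)) : EReal))
      (𝓝[>] (0:ℝ)) (𝓝 B)) :
    eLegendre τ ⊤ = -τ 0 ∧
    {α : EReal | eLegendre τ α ≠ ⊥} = Set.Ici ((a : ℝ) : EReal) ∧
    (∀ α₁ α₂ t : ℝ, a ≤ α₁ → a ≤ α₂ → 0 ≤ t → t ≤ 1 →
      ((t : ℝ) : EReal) * eLegendre τ ((α₁ : ℝ) : EReal) +
          (((1 - t : ℝ)) : EReal) * eLegendre τ ((α₂ : ℝ) : EReal) ≤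
        eLegendre τ (((t * α₁ + (1 - t) * α₂ : ℝ)) : EReal)) ∧
    MonotoneOn (fun α : ℝ => eLegendre τ ((α : ℝ) : EReal)) (Set.Ici a) ∧
    ContinuousOn (fun α : ℝ => eLegendre τ ((α : ℝ) : EReal)) (Set.Ici a) ∧
    StrictMonoOn (fun α : ℝ => eLegendre τ ((α : ℝ) : EReal))
      {α : ℝ | a ≤ α ∧ ((α : ℝ) : EReal) < B} ∧
    (B ≠ ⊤ → ∀ α : ℝ, B ≤ ((α : ℝ) : EReal) → eLegendre τ ((α : ℝ) : EReal) = -τ 0) ∧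
    Filter.Tendsto (fun α : ℝ => eLegendre τ ((α : ℝ) : EReal)) atTop (𝓝 (-τ 0)) := by
  classical
  set tr : ℝ → ℝ := fun q => (τ q).toReal with htr
  have hne_bot : ∀ q : ℝ, 0 ≤ q → τ q ≠ ⊥ := by
    intro q hq
    have : q ∈ {q : ℝ | τ q ≠ ⊥} := by rw [hdom]; exact hq
    exact this
  have hcoe : ∀ q : ℝ, 0 ≤ q → τ q = ((tr q : ℝ) : EReal) := fun q hq =>
    (EReal.coe_toReal (hτ.ne_top q) (hne_bot q hq)).symm
  have hmem_dom : ∀ q : ℝ, τ q ≠ ⊥ → 0 ≤ q := by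
    intro q hq
    have : q ∈ Set.Ici (0:ℝ) := by rw [← hdom]; exact hq
    exact this
  -- real facts
  have tr1 : tr 1 = 0 := by simp [htr, hτ.at_one]
  have tr0 : tr 0 < 0 := by
    have := h0
    rw [hcoe 0 le_rfl] at this
    exact_mod_cast this
  have trmono : ∀ ⦃q₁ q₂ : ℝ⦄, 0 ≤ q₁ → q₁ ≤ q₂ → tr q₁ ≤ tr q₂ := by
    intro q₁ q₂ h1 h12
    have := hτ.mono h12
    rw [hcoe q₁ h1, hcoe q₂ (le_trans h1 h12)] at this
    exact_mod_cast this
  have trlim : Tendsto (fun q => tr q / q) atTop (𝓝 a) := ha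
  have trcont : Tendsto tr (𝓝[>] (0:ℝ)) (𝓝 (tr 0)) := by
    have hev : τ =ᶠ[𝓝[>] (0:ℝ)] fun q => ((tr q : ℝ) : EReal) :=
      eventually_nhdsWithin_of_forall (fun q hq => hcoe q (le_of_lt hq))
    have h1 : Tendsto (fun q => ((tr q : ℝ) : EReal)) (𝓝[>] (0:ℝ)) (𝓝 (τ 0)) :=
      hcont.congr' hev
    rw [hcoe 0 le_rfl] at h1
    exact EReal.tendsto_coe.1 h1
  have trconc : ∀ q₁ q₂ s : ℝ, 0 ≤ q₁ → 0 ≤ q₂ → 0 ≤ s → s ≤ 1 →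
      s * tr q₁ + (1 - s) * tr q₂ ≤ tr (s * q₁ + (1 - s) * q₂) := by
    intro q₁ q₂ s h1 h2 hs0 hs1
    have hc := hτ.concave q₁ q₂ s hs0 hs1
    have hcomb : 0 ≤ s * q₁ + (1 - s) * q₂ := by nlinarith
    rw [hcoe q₁ h1, hcoe q₂ h2, hcoe _ hcomb, ← EReal.coe_mul, ← EReal.coe_mul,
      ← EReal.coe_add] at hc
    exact_mod_cast hc
  -- set description of eLegendre at real points
  have eL_eq : ∀ α : ℝ, eLegendre τ ((α : ℝ) : EReal)
      = sInf (Real.toEReal '' ((fun q => α * q - tr q) '' Set.Ici 0)) := by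
    intro α
    unfold eLegendre
    congr 1
    ext v
    constructor
    · rintro ⟨q, hq, -, rfl⟩
      have hq0 : 0 ≤ q := hmem_dom q hq
      refine ⟨α * q - tr q, ⟨q, hq0, rfl⟩, ?_⟩
      rw [hcoe q hq0, EReal.coe_sub, EReal.coe_mul]
    · rintro ⟨x, ⟨q, hq0, rfl⟩, rfl⟩
      exact ⟨q, hne_bot q hq0, fun h => absurd h (EReal.coe_ne_top α),
        by rw [hcoe q hq0, EReal.coe_sub, EReal.coe_mul]⟩
  -- eLegendre is not ⊥ above a
  have hgt : ∀ α : ℝ, a < α → eLegendre τ ((α : ℝ) : EReal) ≠ ⊥ := by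
    intro α hα
    obtain ⟨m, hm⟩ := bounded_below_gt trmono tr1 trlim hα
    have hle : ((m : ℝ) : EReal) ≤ eLegendre τ ((α : ℝ) : EReal) := by
      rw [eL_eq]
      refine le_sInf ?_
      rintro v ⟨x, ⟨q, hq0, rfl⟩, rfl⟩
      exact_mod_cast hm q hq0
    exact fun hbot => by simp [hbot] at hle
  -- the linear upper bound t q ≤ a q
  have trle : ∀ q : ℝ, 0 ≤ q → tr q ≤ a * q := by
    intro q hq
    rcases eq_or_lt_of_le hq with rfl | hq'
    · simpa using tr0.le
    · refine le_of_forall_pos_le_add ?_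
      intro ε hε
      have hεq : 0 < ε / q := div_pos hε hq'
      have hαa : a < a + ε / q := by linarith
      have hstar := hτ.star_nonneg _ (hgt (a + ε/q) hαa)
      rw [eL_eq] at hstar
      have h1 : (0:EReal) ≤ (((a + ε/q) * q - tr q : ℝ) : EReal) :=
        le_trans hstar (sInf_le ⟨(a + ε/q) * q - tr q, ⟨q, hq, rfl⟩, rfl⟩)
      have h2 : (0:ℝ) ≤ (a + ε/q) * q - tr q := by exact_mod_cast h1
      have h3 : (ε/q) * q = ε := div_mul_cancel₀ ε (ne_of_gt hq')
      nlinarith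
  have h : Hyp tr a := ⟨trmono, tr1, tr0, trlim, trle, trcont⟩
  have eL_coe : ∀ α : ℝ, a ≤ α → eLegendre τ ((α : ℝ) : EReal) = ((Fr tr α : ℝ) : EReal) := by
    intro α hα
    rw [eL_eq]
    exact (Monotone.map_csInf_of_continuousAt (continuous_coe_real_ereal.continuousAt)
      (EReal.coe_strictMono.monotone) (Sne tr α) (Sbdd h hα)).symm
  -- Part 1
  have part1 : eLegendre τ ⊤ = -τ 0 := by
    have hset : {v : EReal | ∃ q : ℝ, τ q ≠ ⊥ ∧ ((⊤:EReal) = ⊤ → q ≤ 0) ∧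
        v = (⊤:EReal) * (q : EReal) - τ q} = {-τ 0} := by
      ext v
      simp only [Set.mem_setOf_eq, Set.mem_singleton_iff]
      constructor
      · rintro ⟨q, hqb, hq0, rfl⟩
        have h1 : q ≤ 0 := hq0 (by trivial)
        have h2 : 0 ≤ q := hmem_dom q hqb
        have h3 : q = 0 := le_antisymm h1 h2
        subst h3
        rw [EReal.coe_zero, mul_zero, zero_sub]
      · rintro rfl
        exact ⟨0, hne_bot 0 le_rfl, fun _ => le_rfl, by rw [EReal.coe_zero, mul_zero, zero_sub]⟩
    unfold eLegendre
    rw [hset, sInf_singleton]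
  -- value at ⊥
  have hbot_eL : eLegendre τ ⊥ = ⊥ := by
    refine le_bot_iff.1 (sInf_le ?_)
    refine ⟨1, by simp [hτ.at_one], fun hh => absurd hh bot_ne_top, ?_⟩
    rw [hτ.at_one, sub_zero, EReal.bot_mul_coe_of_pos one_pos]
  -- Part 2
  have part2 : {α : EReal | eLegendre τ α ≠ ⊥} = Set.Ici ((a : ℝ) : EReal) := by
    ext α
    induction α using EReal.rec with
    | bot => simp [hbot_eL, le_bot_iff]
    | coe α =>
      simp only [Set.mem_setOf_eq, Set.mem_Ici, EReal.coe_le_coe_iff]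
      constructor
      · intro hne
        by_contra hlt
        push_neg at hlt
        apply hne
        rw [eL_eq, sInf_eq_bot]
        intro b hb
        induction b using EReal.rec with
        | bot => exact absurd hb (lt_irrefl _)
        | coe br =>
          obtain ⟨q, hq0, hlt2⟩ := exists_small_val trlim hlt br
          exact ⟨_, ⟨α * q - tr q, ⟨q, hq0, rfl⟩, rfl⟩, EReal.coe_lt_coe_iff.2 hlt2⟩
        | top =>
          exact ⟨_, ⟨α * 0 - tr 0, ⟨0, Set.self_mem_Ici, rfl⟩, rfl⟩, EReal.coe_lt_top _⟩
      · intro hle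
        rw [eL_coe α hle]
        exact EReal.coe_ne_bot _
    | top =>
      simp only [Set.mem_setOf_eq, Set.mem_Ici, part1, le_top, iff_true]
      rw [Ne, EReal.neg_eq_bot_iff]
      exact hτ.ne_top 0
  -- Part 3
  have part3 : ∀ α₁ α₂ s : ℝ, a ≤ α₁ → a ≤ α₂ → 0 ≤ s → s ≤ 1 →
      ((s : ℝ) : EReal) * eLegendre τ ((α₁ : ℝ) : EReal) +
          (((1 - s : ℝ)) : EReal) * eLegendre τ ((α₂ : ℝ) : EReal) ≤
        eLegendre τ (((s * α₁ + (1 - s) * α₂ : ℝ)) : EReal) := by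
    intro α₁ α₂ s h1 h2 hs0 hs1
    have hmid : a ≤ s * α₁ + (1 - s) * α₂ := by nlinarith
    rw [eL_coe α₁ h1, eL_coe α₂ h2, eL_coe _ hmid]
    exact_mod_cast Fr_concave h h1 h2 hs0 hs1
  -- Part 4
  have part4 : MonotoneOn (fun α : ℝ => eLegendre τ ((α : ℝ) : EReal)) (Set.Ici a) := by
    intro α₁ h1 α₂ h2 h12
    simp only
    rw [eL_coe α₁ h1, eL_coe α₂ h2]
    exact_mod_cast Fr_mono h h1 h12
  -- Part 5
  have part5 : ContinuousOn (fun α : ℝ => eLegendre τ ((α : ℝ) : EReal)) (Set.Ici a) := by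
    have hc1 : ContinuousOn (fun α : ℝ => ((Fr tr α : ℝ) : EReal)) (Set.Ici a) :=
      continuous_coe_real_ereal.comp_continuousOn (Fr_continuousOn h)
    exact hc1.congr (fun α hα => eL_coe α hα)
  -- quotient limit in EReal
  have hBcoe : Tendsto (fun q : ℝ => (((tr q - tr 0) * q⁻¹ : ℝ) : EReal))
      (𝓝[>] (0:ℝ)) (𝓝 B) := by
    refine hB.congr' (eventually_nhdsWithin_of_forall (fun q hq => ?_))
    rw [hcoe q (le_of_lt hq), hcoe 0 le_rfl]
    norm_cast
  have hBq : ∀ c : ℝ, ((c:ℝ):EReal) < B → ∀ᶠ q in 𝓝[>] (0:ℝ), c ≤ (tr q - tr 0) * q⁻¹ := by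
    intro c hc
    exact (hBcoe.eventually (eventually_gt_nhds hc)).mono
      (fun q hq => (EReal.coe_lt_coe_iff.1 hq).le)
  -- Part 6
  have part6 : StrictMonoOn (fun α : ℝ => eLegendre τ ((α : ℝ) : EReal))
      {α : ℝ | a ≤ α ∧ ((α : ℝ) : EReal) < B} := by
    intro α₁ hm1 α₂ hm2 h12
    obtain ⟨ha1, hB1⟩ := hm1
    obtain ⟨ha2, -⟩ := hm2
    simp only
    rw [eL_coe α₁ ha1, eL_coe α₂ ha2, EReal.coe_lt_coe_iff]
    refine Fr_strictmono h ha1 h12 ?_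
    obtain ⟨c', hc1, hc2⟩ := exists_between hB1
    have hc't : c' ≠ ⊤ := (lt_of_lt_of_le hc2 le_top).ne
    have hc'b : c' ≠ ⊥ := ((EReal.bot_lt_coe α₁).trans hc1).ne'
    set c := c'.toReal with hcdef
    have hcc : ((c:ℝ):EReal) = c' := EReal.coe_toReal hc't hc'b
    have hα₁c : α₁ < c := by
      rw [← EReal.coe_lt_coe_iff, hcc]; exact hc1
    have hcB : ((c:ℝ):EReal) < B := by rw [hcc]; exact hc2
    obtain ⟨q₀, hq₀c, hq₀pos⟩ := ((hBq c hcB).and self_mem_nhdsWithin).exists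
    have hq₀pos' : (0:ℝ) < q₀ := hq₀pos
    have hbound : tr 0 + c * q₀ ≤ tr q₀ := by
      have h2 : c * q₀ ≤ (tr q₀ - tr 0) * q₀⁻¹ * q₀ :=
        mul_le_mul_of_nonneg_right hq₀c hq₀pos'.le
      rw [mul_assoc, inv_mul_cancel₀ (ne_of_gt hq₀pos'), mul_one] at h2
      linarith
    exact Fr_lt_top h ha1 hq₀pos' hbound hα₁c
  -- Part 7
  have part7 : B ≠ ⊤ → ∀ α : ℝ, B ≤ ((α : ℝ) : EReal) →
      eLegendre τ ((α : ℝ) : EReal) = -τ 0 := by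
    intro hBne α hBα
    have hBbot : B ≠ ⊥ := (lt_of_le_of_lt bot_le hBpos).ne'
    set b := B.toReal with hbdef
    have hbB : ((b:ℝ):EReal) = B := EReal.coe_toReal hBne hBbot
    have hub : ∀ q : ℝ, 0 < q → tr q - tr 0 ≤ b * q := by
      intro q₂ hq₂
      have hquot : ((((tr q₂ - tr 0) * q₂⁻¹ : ℝ)) : EReal) ≤ B := by
        refine ge_of_tendsto hBcoe ?_
        filter_upwards [Ioc_mem_nhdsGT_of_mem (Set.left_mem_Ico.2 hq₂)] with q₁ hq₁
        exact EReal.coe_le_coe_iff.2 (quot_noninc trconc hq₁.1 hq₁.2)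
      rw [← hbB, EReal.coe_le_coe_iff] at hquot
      have h2 := mul_le_mul_of_nonneg_right hquot hq₂.le
      rw [mul_assoc, inv_mul_cancel₀ (ne_of_gt hq₂), mul_one] at h2
      linarith
    have hab : a ≤ b := by
      refine le_of_tendsto trlim ?_
      filter_upwards [eventually_ge_atTop (1:ℝ)] with q hq
      have hq0 : (0:ℝ) < q := by linarith
      have h1 := hub q hq0
      rw [div_le_iff₀ hq0]
      nlinarith [tr0]
    have hba : b ≤ α := by rw [← EReal.coe_le_coe_iff, hbB]; exact hBα
    have hαa : a ≤ α := le_trans hab hba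
    rw [eL_coe α hαa, Fr_eq_neg_t0 h (fun q hq => hub q hq) hba hαa,
      hcoe 0 le_rfl, EReal.coe_neg]
  -- Part 8
  have part8 : Tendsto (fun α : ℝ => eLegendre τ ((α : ℝ) : EReal)) atTop (𝓝 (-τ 0)) := by
    have h8 : Tendsto (fun α : ℝ => ((Fr tr α : ℝ) : EReal)) atTop (𝓝 (-τ 0)) := by
      rw [hcoe 0 le_rfl, ← EReal.coe_neg]
      exact EReal.tendsto_coe.2 (Fr_tendsto h)
    exact h8.congr' ((eventually_ge_atTop a).mono fun α hα => (eL_coe α hα).symm)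
  exact ⟨part1, part2, part3, part4, part5, part6, part7, part8⟩

end
end

section
/- Let d ≥ 1 and let τ : ℝ → ℝ∪{−∞} satisfy the necessary properties of an L^q-spectrum in dimension d, with dom(τ) = [0,∞). Then the duality (τ*)* = τ holds on ℝ: for every q ∈ ℝ, τ(q) = inf{qα − τ*(α) : α ∈ ℝ∪{∞}, τ*(α) > −∞}, with the conventions q·∞ = +∞ for q > 0, q·∞ = −∞ for q < 0, and 0·∞ = 0. -/
open MeasureTheory Metric Set Filter Topology
open scoped ENNReal NNReal

noncomputable section

/-- Proposition 1.4(2)(d): the duality `(τ*)* = τ` on `ℝ`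
when `dom τ = [0,∞)`. -/
theorem statement7 (d : ℕ) (hd : 1 ≤ d) (τ : ℝ → EReal) (hτ : IsLqSpec d τ)
    (hdom : {q : ℝ | τ q ≠ ⊥} = Set.Ici 0) :
    ∀ q : ℝ, τ q = sInf {v : EReal | ∃ α : EReal, α ≠ ⊥ ∧ eLegendre τ α ≠ ⊥ ∧
        v = ((q : ℝ) : EReal) * α - eLegendre τ α} := by
  have hne_bot : ∀ q : ℝ, 0 ≤ q → τ q ≠ ⊥ := by
    intro q hq
    have : q ∈ {q : ℝ | τ q ≠ ⊥} := hdom ▸ Set.mem_Ici.mpr hq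
    exact this
  have hbot : ∀ q : ℝ, q < 0 → τ q = ⊥ := by
    intro q hq
    by_contra h
    have : q ∈ Set.Ici (0:ℝ) := hdom ▸ h
    exact absurd this (by simpa using hq)
  set g : ℝ → ℝ := fun q => (τ q).toReal with hgdef
  have hg : ∀ q : ℝ, 0 ≤ q → τ q = ((g q : ℝ) : EReal) := fun q hq =>
    (EReal.coe_toReal (hτ.ne_top q) (hne_bot q hq)).symm
  have hgc : ∀ q₁ q₂ t : ℝ, 0 ≤ q₁ → 0 ≤ q₂ → 0 ≤ t → t ≤ 1 →
      t * g q₁ + (1 - t) * g q₂ ≤ g (t * q₁ + (1 - t) * q₂) := by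
    intro q₁ q₂ t h1 h2 ht ht1
    have key := hτ.concave q₁ q₂ t ht ht1
    have hmix : 0 ≤ t * q₁ + (1 - t) * q₂ := by nlinarith
    rw [hg q₁ h1, hg q₂ h2, hg _ hmix, ← EReal.coe_mul, ← EReal.coe_mul,
      ← EReal.coe_add] at key
    exact_mod_cast key
  have hgmono : ∀ a b : ℝ, 0 ≤ a → a ≤ b → g a ≤ g b := by
    intro a b ha hab
    have := hτ.mono hab
    rw [hg a ha, hg b (ha.trans hab)] at this
    exact_mod_cast this
  have hg1 : g 1 = 0 := by
    have h1 := hτ.at_one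
    have h := hg 1 zero_le_one
    rw [h1] at h
    exact_mod_cast h.symm
  have hslope : ∀ a b c : ℝ, 0 ≤ a → a < b → b < c →
      (g c - g b) / (c - b) ≤ (g b - g a) / (b - a) := by
    intro a b c ha hab hbc
    have hac : a < c := hab.trans hbc
    have hca : (0:ℝ) < c - a := by linarith
    have ht0 : 0 < (c - b) / (c - a) := div_pos (by linarith) hca
    have ht1 : (c - b) / (c - a) ≤ 1 := by
      rw [div_le_one hca]; linarith
    have hmix : (c - b) / (c - a) * a + (1 - (c - b) / (c - a)) * c = b := by
      field_simp
      ring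
    have hcc := hgc a c ((c - b) / (c - a)) ha (by linarith) ht0.le ht1
    rw [hmix] at hcc
    have h2 := mul_le_mul_of_nonneg_left hcc hca.le
    rw [mul_add] at h2
    have e1 : (c - a) * ((c - b) / (c - a) * g a) = (c - b) * g a := by
      field_simp
    have e2 : (c - a) * ((1 - (c - b) / (c - a)) * g c) = (b - a) * g c := by
      field_simp
      ring
    rw [div_le_div_iff₀ (by linarith) (by linarith)]
    nlinarith [h2, e1, e2]
  have hLtop : eLegendre τ ⊤ = ((-(g 0) : ℝ) : EReal) := by
    have h0 : ((-(g 0) : ℝ) : EReal) ∈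
        {v : EReal | ∃ q : ℝ, τ q ≠ ⊥ ∧ ((⊤:EReal) = ⊤ → q ≤ 0) ∧
          v = (⊤:EReal) * (q : EReal) - τ q} := by
      refine ⟨0, hne_bot 0 le_rfl, fun _ => le_rfl, ?_⟩
      rw [hg 0 le_rfl]
      simp [← EReal.coe_neg, sub_eq_add_neg]
    apply le_antisymm (sInf_le h0)
    apply le_sInf
    rintro v ⟨p, hp1, hp2, rfl⟩
    have hp0 : 0 ≤ p := by
      have := Set.ext_iff.mp hdom p
      simpa using this.mp hp1
    have : p = 0 := le_antisymm (hp2 rfl) hp0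
    subst this
    rw [hg 0 le_rfl]
    simp [← EReal.coe_neg, sub_eq_add_neg]
  intro q
  have dir1 : ∀ v ∈ {v : EReal | ∃ α : EReal, α ≠ ⊥ ∧ eLegendre τ α ≠ ⊥ ∧
      v = ((q : ℝ) : EReal) * α - eLegendre τ α}, τ q ≤ v := by
    rintro v ⟨α, hαbot, hLbot, rfl⟩
    rcases lt_trichotomy q 0 with hq | hq | hq
    · rw [hbot q hq]; exact bot_le
    · subst hq
      induction α with
      | bot => exact absurd rfl hαbot
      | coe a =>
        have hle : eLegendre τ ((a:ℝ):EReal) ≤ ((a * 0 - g 0 : ℝ) : EReal) := by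
          apply sInf_le
          refine ⟨0, hne_bot 0 le_rfl, fun h => absurd h (EReal.coe_ne_top a), ?_⟩
          rw [hg 0 le_rfl, ← EReal.coe_mul, ← EReal.coe_sub]
        have hLne : eLegendre τ ((a:ℝ):EReal) ≠ ⊤ :=
          ne_top_of_le_ne_top (EReal.coe_ne_top _) hle
        have hc : eLegendre τ ((a:ℝ):EReal)
            = (((eLegendre τ ((a:ℝ):EReal)).toReal :ℝ):EReal) :=
          (EReal.coe_toReal hLne hLbot).symm
        set c := (eLegendre τ ((a:ℝ):EReal)).toReal with hcdef
        rw [hc] at hle ⊢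
        have hcle : c ≤ a * 0 - g 0 := by exact_mod_cast hle
        rw [hg 0 le_rfl, ← EReal.coe_mul, ← EReal.coe_sub]
        exact_mod_cast (by linarith : g 0 ≤ (0:ℝ) * a - c)
      | top =>
        rw [hLtop, hg 0 le_rfl]
        rw [show ((0:ℝ):EReal) * ⊤ = 0 by simp, ← EReal.coe_zero, ← EReal.coe_sub]
        norm_num
    · induction α with
      | bot => exact absurd rfl hαbot
      | coe a =>
        have hle : eLegendre τ ((a:ℝ):EReal) ≤ ((a * q - g q : ℝ) : EReal) := by
          apply sInf_le
          refine ⟨q, hne_bot q hq.le, fun h => absurd h (EReal.coe_ne_top a), ?_⟩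
          rw [hg q hq.le, ← EReal.coe_mul, ← EReal.coe_sub]
        have hLne : eLegendre τ ((a:ℝ):EReal) ≠ ⊤ :=
          ne_top_of_le_ne_top (EReal.coe_ne_top _) hle
        have hc : eLegendre τ ((a:ℝ):EReal)
            = (((eLegendre τ ((a:ℝ):EReal)).toReal :ℝ):EReal) :=
          (EReal.coe_toReal hLne hLbot).symm
        set c := (eLegendre τ ((a:ℝ):EReal)).toReal with hcdef
        rw [hc] at hle ⊢
        have hcle : c ≤ a * q - g q := by exact_mod_cast hle
        rw [hg q hq.le, ← EReal.coe_mul, ← EReal.coe_sub]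
        exact_mod_cast (by linarith : g q ≤ q * a - c)
      | top =>
        rw [hLtop, EReal.coe_mul_top_of_pos (by exact_mod_cast hq), EReal.top_sub_coe]
        exact le_top
  refine le_antisymm (le_sInf dir1) ?_
  rcases lt_trichotomy q 0 with hq | hq | hq
  · rw [hbot q hq]
    refine sInf_le ?_
    refine ⟨⊤, by simp, by rw [hLtop]; exact EReal.coe_ne_bot _, ?_⟩
    rw [hLtop, EReal.coe_mul_top_of_neg (by exact_mod_cast hq), EReal.bot_sub]
  · subst hq
    refine sInf_le ?_
    refine ⟨⊤, by simp, by rw [hLtop]; exact EReal.coe_ne_bot _, ?_⟩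
    rw [hLtop, hg 0 le_rfl]
    rw [show ((0:ℝ):EReal) * ⊤ = 0 by simp, ← EReal.coe_zero, ← EReal.coe_sub]
    norm_num
  · -- q > 0 : supergradient
    set S : Set ℝ := {s : ℝ | ∃ q', 0 ≤ q' ∧ q' < q ∧ s = (g q - g q') / (q - q')}
      with hSdef
    have hSne : S.Nonempty := ⟨(g q - g 0) / (q - 0), 0, le_rfl, hq, rfl⟩
    have hSbdd : BddBelow S := by
      refine ⟨0, ?_⟩
      rintro s ⟨q', h0, hlt, rfl⟩
      exact div_nonneg (by linarith [hgmono q' q h0 hlt.le]) (by linarith)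
    set α : ℝ := sInf S with hαdef
    have hsuper : ∀ q' : ℝ, 0 ≤ q' → g q' ≤ g q + α * (q' - q) := by
      intro q' h0
      rcases lt_trichotomy q' q with hlt | heq | hgt
      · have h1 : α ≤ (g q - g q') / (q - q') := csInf_le hSbdd ⟨q', h0, hlt, rfl⟩
        have h2 : α * (q - q') ≤ g q - g q' := by
          rw [← le_div_iff₀ (by linarith)]; exact h1
        nlinarith
      · subst heq; simp
      · have h1 : (g q' - g q) / (q' - q) ≤ α := by
          apply le_csInf hSne
          rintro s ⟨a, ha0, halt, rfl⟩
          exact hslope a q q' ha0 halt hgt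
        have h2 : g q' - g q ≤ α * (q' - q) := by
          rw [← div_le_iff₀ (by linarith)]; exact h1
        linarith
    have heL : eLegendre τ ((α:ℝ):EReal) = ((α * q - g q : ℝ) : EReal) := by
      apply le_antisymm
      · apply sInf_le
        refine ⟨q, hne_bot q hq.le, fun h => absurd h (EReal.coe_ne_top α), ?_⟩
        rw [hg q hq.le, ← EReal.coe_mul, ← EReal.coe_sub]
      · apply le_sInf
        rintro v ⟨p, hp1, _, rfl⟩
        have hp0 : 0 ≤ p := by
          have := Set.ext_iff.mp hdom p
          simpa using this.mp hp1
        rw [hg p hp0, ← EReal.coe_mul, ← EReal.coe_sub]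
        have := hsuper p hp0
        exact_mod_cast (by nlinarith : α * q - g q ≤ α * p - g p)
    refine sInf_le ?_
    refine ⟨((α:ℝ):EReal), EReal.coe_ne_bot _, by rw [heL]; exact EReal.coe_ne_bot _, ?_⟩
    rw [heL, hg q hq.le, ← EReal.coe_mul, ← EReal.coe_sub]
    exact_mod_cast (by ring : g q = q * α - (α * q - g q))

end
end

section
/- For every integer d ≥ 1, every μ ∈ M_c^+(ℝ^d), and all 0 ≤ α ≤ β ≤ ∞: dim_H E(μ,α,β) ≤ min( f̄^LD_μ(α), f̄^LD_μ(β), f̲^LD_μ(α,β) ), with the convention dim_H ∅ = −∞. -/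
open MeasureTheory Metric Set Filter Topology
open scoped ENNReal NNReal

noncomputable section

namespace S11

/-! ### elog and translation lemmas -/

lemma elog_real {m : ℝ≥0∞} (h0 : m ≠ 0) (ht : m ≠ ⊤) :
    elog m = ((Real.log m.toReal : ℝ) : EReal) := by simp [elog, h0, ht]

lemma count_le_of_lt {N : ℝ≥0∞} {r t : ℝ} (hr : 0 < r) (hr1 : r < 1)
    (h : elog N * (((-Real.log r)⁻¹ : ℝ) : EReal) < (t : EReal)) :
    N ≤ ENNReal.ofReal (r ^ (-t)) := by
  have hlog : 0 < -Real.log r := by have := Real.log_neg hr hr1; linarith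
  have hcpos : (0:ℝ) < (-Real.log r)⁻¹ := inv_pos.2 hlog
  rcases eq_or_ne N 0 with rfl | hN0
  · simp
  rcases eq_or_ne N ⊤ with rfl | hNt
  · exfalso
    have he : elog ⊤ = (⊤ : EReal) := by simp [elog]
    rw [he, EReal.top_mul_of_pos (by exact_mod_cast hcpos)] at h
    exact (not_top_lt h)
  rw [elog_real hN0 hNt, ← EReal.coe_mul] at h
  have h' : Real.log N.toReal * (-Real.log r)⁻¹ < t := by exact_mod_cast h
  have h2 : Real.log N.toReal < t * (-Real.log r) := by
    rw [← div_eq_mul_inv] at h'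
    have := (div_lt_iff₀ hlog).1 h'
    linarith
  have h3 : Real.log N.toReal < Real.log (r ^ (-t)) := by
    rw [Real.log_rpow hr]; linarith
  have hNpos : 0 < N.toReal := ENNReal.toReal_pos hN0 hNt
  have h4 := (Real.log_lt_log_iff hNpos (Real.rpow_pos_of_pos hr _)).1 h3
  calc N = ENNReal.ofReal N.toReal := (ENNReal.ofReal_toReal hNt).symm
    _ ≤ _ := ENNReal.ofReal_le_ofReal h4.le

variable {d : ℕ} {μ : Measure (Euc d)}

lemma ball_pos {x : Euc d} (hx : x ∈ msupp μ) {r : ℝ} (hr : 0 < r) :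
    μ (closedBall x r) ≠ 0 := (hx r hr).ne'

/-- value of the local-dimension quotient as a real number -/
lemma dval [IsFiniteMeasure μ] {x : Euc d} (hx : x ∈ msupp μ) {r : ℝ} (hr : 0 < r) :
    elog (μ (closedBall x r)) * (((Real.log r)⁻¹ : ℝ) : EReal)
      = ((Real.log (μ (closedBall x r)).toReal * (Real.log r)⁻¹ : ℝ) : EReal) := by
  rw [elog_real (ball_pos hx hr) (measure_ne_top μ _), ← EReal.coe_mul]

/-- `d(x,r) > c` implies `μ(B(x,r)) ≤ r^c`. -/
lemma ball_le_of_lt [IsFiniteMeasure μ] {x : Euc d} (hx : x ∈ msupp μ) {r c : ℝ}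
    (hr : 0 < r) (hr1 : r < 1)
    (h : (c : EReal) < elog (μ (closedBall x r)) * (((Real.log r)⁻¹ : ℝ) : EReal)) :
    μ (closedBall x r) ≤ ENNReal.ofReal (r ^ c) := by
  set m := (μ (closedBall x r)).toReal with hm
  have hL : Real.log r < 0 := Real.log_neg hr hr1
  rw [dval hx hr] at h
  have h' : c < Real.log m * (Real.log r)⁻¹ := by exact_mod_cast h
  have h2 : Real.log m < c * Real.log r := by
    rw [← div_eq_mul_inv] at h'
    have := (lt_div_iff_of_neg hL).1 h'
    linarith
  have h3 : Real.log m < Real.log (r ^ c) := by rw [Real.log_rpow hr]; linarith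
  have hmpos : 0 < m := ENNReal.toReal_pos (ball_pos hx hr) (measure_ne_top μ _)
  have h4 := (Real.log_lt_log_iff hmpos (Real.rpow_pos_of_pos hr _)).1 h3
  calc μ (closedBall x r) = ENNReal.ofReal m := (ENNReal.ofReal_toReal (measure_ne_top μ _)).symm
    _ ≤ _ := ENNReal.ofReal_le_ofReal h4.le

/-- `d(x,r) < c` implies `μ(B(x,r)) ≥ r^c`. -/
lemma le_ball_of_lt [IsFiniteMeasure μ] {x : Euc d} (hx : x ∈ msupp μ) {r c : ℝ}
    (hr : 0 < r) (hr1 : r < 1)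
    (h : elog (μ (closedBall x r)) * (((Real.log r)⁻¹ : ℝ) : EReal) < (c : EReal)) :
    ENNReal.ofReal (r ^ c) ≤ μ (closedBall x r) := by
  set m := (μ (closedBall x r)).toReal with hm
  have hL : Real.log r < 0 := Real.log_neg hr hr1
  rw [dval hx hr] at h
  have h' : Real.log m * (Real.log r)⁻¹ < c := by exact_mod_cast h
  have h2 : c * Real.log r < Real.log m := by
    rw [← div_eq_mul_inv] at h'
    have := (div_lt_iff_of_neg hL).1 h'
    linarith
  have h3 : Real.log (r ^ c) < Real.log m := by rw [Real.log_rpow hr]; linarith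
  have hmpos : 0 < m := ENNReal.toReal_pos (ball_pos hx hr) (measure_ne_top μ _)
  have h4 := (Real.log_lt_log_iff (Real.rpow_pos_of_pos hr _) hmpos).1 h3
  calc ENNReal.ofReal (r ^ c) ≤ ENNReal.ofReal m := ENNReal.ofReal_le_ofReal h4.le
    _ = μ (closedBall x r) := ENNReal.ofReal_toReal (measure_ne_top μ _)

/-! ### rpowE lemmas -/

lemma rpowE_coe (r : ℝ) (c : ℝ) : rpowE r ((c : ℝ) : EReal) = ENNReal.ofReal (r ^ c) := by
  simp [rpowE]

lemma rpowE_top (r : ℝ) : rpowE r ⊤ = 0 := by simp [rpowE]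

end S11

namespace S11

/-! ### Maximal packings -/

lemma exists_packing_cover {X : Type*} [MetricSpace X] (S : Set X) {r : ℝ} (hr : 0 < r) :
    ∃ P : Set X, P ⊆ S ∧ P.PairwiseDisjoint (fun x => closedBall x r) ∧
      S ⊆ ⋃ p ∈ P, closedBall p (2 * r) := by
  have hzorn : ∀ c ⊆ {P : Set X | P ⊆ S ∧ P.PairwiseDisjoint (fun x => closedBall x r)},
      IsChain (· ⊆ ·) c → ∃ ub ∈ {P : Set X | P ⊆ S ∧ P.PairwiseDisjoint (fun x => closedBall x r)},
        ∀ s ∈ c, s ⊆ ub := by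
    intro c hc hchain
    refine ⟨⋃₀ c, ⟨sUnion_subset fun s hs => (hc hs).1, ?_⟩, fun s hs => subset_sUnion_of_mem hs⟩
    intro a ha b hb hab
    obtain ⟨sa, hsa, ha'⟩ := ha
    obtain ⟨sb, hsb, hb'⟩ := hb
    rcases hchain.total hsa hsb with h | h
    · exact (hc hsb).2 (h ha') hb' hab
    · exact (hc hsa).2 ha' (h hb') hab
  obtain ⟨P, hP⟩ := zorn_subset _ hzorn
  · refine ⟨P, hP.prop.1, hP.prop.2, ?_⟩
    intro x hx
    by_cases hxP : ∃ p ∈ P, ¬ Disjoint (closedBall x r) (closedBall p r)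
    · obtain ⟨p, hp, hnd⟩ := hxP
      obtain ⟨y, hy1, hy2⟩ := Set.not_disjoint_iff.1 hnd
      refine mem_biUnion hp (mem_closedBall.2 ?_)
      have h1 : dist y x ≤ r := mem_closedBall.1 hy1
      have h2 : dist y p ≤ r := mem_closedBall.1 hy2
      calc dist x p ≤ dist x y + dist y p := dist_triangle _ _ _
        _ ≤ r + r := by rw [dist_comm x y]; exact add_le_add h1 h2
        _ = 2 * r := by ring
    · push_neg at hxP
      have hins : insert x P ∈
          {P : Set X | P ⊆ S ∧ P.PairwiseDisjoint (fun x => closedBall x r)} := by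
        refine ⟨insert_subset hx hP.prop.1, hP.prop.2.insert fun p hp _ => hxP p hp⟩
      have hsub : insert x P ⊆ P := hP.2 hins (subset_insert x P)
      exact mem_biUnion (hsub (mem_insert x P)) (mem_closedBall_self (by positivity))

variable {d : ℕ} {μ : Measure (Euc d)}

lemma encard_le_ldCount {P : Set (Euc d)} {lo hi : ℝ≥0∞} {r : ℝ}
    (hP : IsPacking μ r P)
    (hw : ∀ p ∈ P, lo ≤ μ (closedBall p r) ∧ μ (closedBall p r) ≤ hi) :
    (P.encard : ℝ≥0∞) ≤ ldCount μ lo hi r := by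
  have hPe : {x ∈ P | lo ≤ μ (closedBall x r) ∧ μ (closedBall x r) ≤ hi} = P := by
    ext x
    exact ⟨fun h => h.1, fun h => ⟨h, hw x h⟩⟩
  have : (P.encard : ℝ≥0∞)
      = (({x ∈ P | lo ≤ μ (closedBall x r) ∧ μ (closedBall x r) ≤ hi}).encard : ℝ≥0∞) := by
    rw [hPe]
  rw [this, ldCount]
  exact le_iSup₂_of_le P hP le_rfl

lemma one_le_ldCount {x : Euc d} (hx : x ∈ msupp μ) {lo hi : ℝ≥0∞} {r : ℝ}
    (h1 : lo ≤ μ (closedBall x r)) (h2 : μ (closedBall x r) ≤ hi) :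
    1 ≤ ldCount μ lo hi r := by
  have hP : IsPacking μ r {x} := ⟨singleton_subset_iff.2 hx, Set.pairwiseDisjoint_singleton _ _⟩
  have := encard_le_ldCount hP (by intro p hp; rcases hp with rfl; exact ⟨h1, h2⟩)
  simpa using this

/-! ### diameter and constant sums -/

lemma diam_closedBall_le' {X : Type*} [MetricSpace X] (x : X) {R : ℝ} (hR : 0 ≤ R) :
    EMetric.diam (closedBall x R) ≤ ENNReal.ofReal (2 * R) := by
  refine EMetric.diam_le fun y hy z hz => ?_
  rw [edist_dist]
  refine ENNReal.ofReal_le_ofReal ?_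
  have hy' := mem_closedBall.1 hy
  have hz' := mem_closedBall.1 hz
  calc dist y z ≤ dist y x + dist x z := dist_triangle _ _ _
    _ ≤ R + R := by rw [dist_comm x z]; exact add_le_add hy' hz'
    _ = 2 * R := by ring

lemma tsum_const_encard {X : Type*} {P : Set X} (hP : P.Finite) (c : ℝ≥0∞) :
    ∑' _ : ↥P, c = (P.encard : ℝ≥0∞) * c := by
  have := hP.fintype
  rw [tsum_fintype, Finset.sum_const, Set.encard_eq_coe_toFinset_card, nsmul_eq_mul]
  simp [Set.toFinset_card]
  rw [← hP.cast_ncard_eq]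
  rfl

end S11

namespace S11

variable {d : ℕ} {μ : Measure (Euc d)}

lemma encard_finite_of_le {X : Type*} {P : Set X} {C : ℝ≥0∞} (hC : C ≠ ⊤)
    (h : (P.encard : ℝ≥0∞) ≤ C) : P.Finite := by
  rw [← Set.encard_ne_top_iff]
  intro htop
  rw [htop] at h
  simp at h
  exact hC (by simpa using h)

lemma cover_sum_le {X : Type*} [MetricSpace X] {P : Set X} {ρ t s : ℝ} (hρ : 0 < ρ)
    (hs : 0 ≤ s) (henc : (P.encard : ℝ≥0∞) ≤ ENNReal.ofReal (ρ ^ (-t))) :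
    ∑' p : ↥P, EMetric.diam (closedBall (p : X) (2 * ρ)) ^ s
      ≤ ENNReal.ofReal (4 ^ s * ρ ^ (s - t)) := by
  have hfin : P.Finite := encard_finite_of_le ENNReal.ofReal_ne_top henc
  have h4ρ : (0:ℝ) < 4 * ρ := by linarith
  have hstep : ∀ p : ↥P, EMetric.diam (closedBall (p : X) (2 * ρ)) ^ s
      ≤ ENNReal.ofReal ((4 * ρ) ^ s) := by
    intro p
    have h := diam_closedBall_le' (p : X) (by linarith : (0:ℝ) ≤ 2 * ρ)
    have h2 : (2 : ℝ) * (2 * ρ) = 4 * ρ := by ring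
    rw [h2] at h
    calc EMetric.diam (closedBall (p : X) (2 * ρ)) ^ s
        ≤ ENNReal.ofReal (4 * ρ) ^ s := ENNReal.rpow_le_rpow h hs
      _ = ENNReal.ofReal ((4 * ρ) ^ s) := ENNReal.ofReal_rpow_of_pos h4ρ
  calc ∑' p : ↥P, EMetric.diam (closedBall (p : X) (2 * ρ)) ^ s
      ≤ ∑' _ : ↥P, ENNReal.ofReal ((4 * ρ) ^ s) := ENNReal.tsum_le_tsum hstep
    _ = (P.encard : ℝ≥0∞) * ENNReal.ofReal ((4 * ρ) ^ s) := tsum_const_encard hfin _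
    _ ≤ ENNReal.ofReal (ρ ^ (-t)) * ENNReal.ofReal ((4 * ρ) ^ s) := by
        exact mul_le_mul_left henc _
    _ = ENNReal.ofReal (ρ ^ (-t) * (4 * ρ) ^ s) := by
        rw [← ENNReal.ofReal_mul (Real.rpow_nonneg hρ.le _)]
    _ = ENNReal.ofReal (4 ^ s * ρ ^ (s - t)) := by
        congr 1
        rw [Real.mul_rpow (by norm_num) hρ.le, show s - t = -t + s by ring,
          Real.rpow_add hρ]
        ring

end S11

namespace S11

variable {d : ℕ} {μ : Measure (Euc d)}

/-- From a window on all of `S` at radius `r`, get a packing-based cover of `S`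
with controlled cardinality. -/
lemma pack_of_window {S : Set (Euc d)} (hS : S ⊆ msupp μ) {r : ℝ} (hr : 0 < r)
    {lo hi : ℝ≥0∞}
    (hw : ∀ x ∈ S, lo ≤ μ (closedBall x r) ∧ μ (closedBall x r) ≤ hi) :
    ∃ P : Set (Euc d), (P.encard : ℝ≥0∞) ≤ ldCount μ lo hi r ∧
      S ⊆ ⋃ p ∈ P, closedBall p (2 * r) := by
  obtain ⟨P, hPS, hPd, hPcov⟩ := exists_packing_cover S hr
  exact ⟨P, encard_le_ldCount ⟨hPS.trans hS, hPd⟩ (fun p hp => hw p (hPS hp)), hPcov⟩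

lemma one_div_succ_pos (m : ℕ) : (0:ℝ) < 1 / (m + 1) := by positivity

lemma one_div_succ_le_one (m : ℕ) : (1:ℝ) / (m + 1) ≤ 1 := by
  rw [div_le_one (by positivity)]
  exact le_add_of_nonneg_left (Nat.cast_nonneg m)

lemma tendsto_one_div_succ : Tendsto (fun k : ℕ => (1:ℝ) / (k + 1)) atTop (𝓝 0) := by
  have h : Tendsto (fun k : ℕ => ((k:ℝ) + 1)) atTop atTop :=
    tendsto_natCast_atTop_atTop.atTop_add tendsto_const_nhds
  exact h.inv_tendsto_atTop.congr fun k => (one_div _).symm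

/-- dimension bound from covers at a vanishing sequence of scales -/
lemma dimH_le_of_covers {E : Set (Euc d)} {t s : ℝ} (ht : 0 ≤ t) (hts : t < s)
    {rr : ℕ → ℝ} (hrpos : ∀ k, 0 < rr k) (hrle : ∀ k, rr k ≤ 1 / (k + 1))
    {P : ℕ → Set (Euc d)}
    (hPenc : ∀ k, ((P k).encard : ℝ≥0∞) ≤ ENNReal.ofReal ((rr k) ^ (-t)))
    (hPcov : ∀ k, E ⊆ ⋃ p ∈ P k, closedBall p (2 * rr k)) :
    dimH E ≤ ENNReal.ofReal s := by
  have hs : 0 < s := lt_of_le_of_lt ht hts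
  have hfin : ∀ k, (P k).Finite := fun k =>
    encard_finite_of_le ENNReal.ofReal_ne_top (hPenc k)
  haveI : ∀ k, Countable ↥(P k) := fun k => (hfin k).countable.to_subtype
  have hμH : μH[s] E ≤
      liminf (fun k => ∑' p : ↥(P k), EMetric.diam (closedBall (p : Euc d) (2 * rr k)) ^ s)
        atTop := by
    refine MeasureTheory.Measure.hausdorffMeasure_le_liminf_tsum (ι := fun k => ↥(P k)) s E (fun k => ENNReal.ofReal (4 * rr k)) ?_
      (fun k p => closedBall (p : Euc d) (2 * rr k)) ?_ ?_
    · have hreal : Tendsto (fun k : ℕ => 4 * rr k) atTop (𝓝 0) := by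
        have hb : Tendsto (fun k : ℕ => 4 * (1 / ((k:ℝ) + 1))) atTop (𝓝 0) := by
          simpa using tendsto_one_div_succ.const_mul 4
        refine squeeze_zero (fun k => by have := hrpos k; linarith) (fun k => ?_) hb
        have := hrle k; linarith
      have := (ENNReal.continuous_ofReal.tendsto 0).comp hreal
      simpa [Function.comp_def] using this
    · refine Eventually.of_forall fun k => fun p => ?_
      have h := diam_closedBall_le' (p : Euc d) (by have := (hrpos k); linarith : (0:ℝ) ≤ 2 * rr k)
      rw [show (2:ℝ) * (2 * rr k) = 4 * rr k by ring] at h; exact h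
    · refine Eventually.of_forall fun k => ?_
      intro x hx
      obtain ⟨p, hp, hxp⟩ := mem_iUnion₂.1 (hPcov k hx)
      exact mem_iUnion.2 ⟨⟨p, hp⟩, hxp⟩
  have hbound : ∀ k : ℕ,
      (∑' p : ↥(P k), EMetric.diam (closedBall (p : Euc d) (2 * rr k)) ^ s)
        ≤ ENNReal.ofReal (4 ^ s * (1 / (k + 1)) ^ (s - t)) := by
    intro k
    refine (cover_sum_le (hrpos k) hs.le (hPenc k)).trans ?_
    refine ENNReal.ofReal_le_ofReal ?_
    have := Real.rpow_le_rpow (hrpos k).le (hrle k) (by linarith : (0:ℝ) ≤ s - t)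
    have h4 : (0:ℝ) ≤ 4 ^ s := Real.rpow_nonneg (by norm_num) _
    nlinarith [this]
  have hlim : Tendsto (fun k : ℕ => ENNReal.ofReal (4 ^ s * (1 / (k + 1)) ^ (s - t)))
      atTop (𝓝 0) := by
    have hreal : Tendsto (fun k : ℕ => 4 ^ s * (1 / ((k:ℝ) + 1)) ^ (s - t)) atTop (𝓝 0) := by
      have h1 : Tendsto (fun k : ℕ => (1 / ((k:ℝ) + 1)) ^ (s - t)) atTop (𝓝 0) := by
        have := tendsto_one_div_succ.rpow_const (p := s - t) (Or.inr (by linarith))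
        simpa [Real.zero_rpow (by linarith : s - t ≠ 0)] using this
      simpa using h1.const_mul (4 ^ s : ℝ)
    have := (ENNReal.continuous_ofReal.tendsto 0).comp hreal
    simpa [Function.comp_def] using this
  have hliminf : liminf (fun k => ∑' p : ↥(P k),
      EMetric.diam (closedBall (p : Euc d) (2 * rr k)) ^ s) atTop ≤ 0 := by
    calc _ ≤ liminf (fun k : ℕ => ENNReal.ofReal (4 ^ s * (1 / (k + 1)) ^ (s - t))) atTop :=
          liminf_le_liminf (Eventually.of_forall hbound)
      _ = 0 := hlim.liminf_eq
  have hzero : μH[s] E = 0 := le_antisymm (hμH.trans hliminf) zero_le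
  have : dimH E ≤ (s.toNNReal : ℝ≥0∞) := by
    refine dimH_le_of_hausdorffMeasure_ne_top ?_
    rw [show ((s.toNNReal : ℝ)) = s from Real.coe_toNNReal s hs.le, hzero]
    exact ENNReal.zero_ne_top
  simpa [ENNReal.ofReal] using this

end S11

namespace S11

variable {d : ℕ} {μ : Measure (Euc d)}

lemma engine1 [IsFiniteMeasure μ] {E : Set (Euc d)} (hE : E ⊆ msupp μ)
    {lo hi : ℝ → ℝ≥0∞} {t s : ℝ} (ht : 0 ≤ t) (hts : t < s)
    (hwin : ∀ x ∈ E, ∀ᶠ r in 𝓝[>] (0:ℝ),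
       lo r ≤ μ (closedBall x r) ∧ μ (closedBall x r) ≤ hi r)
    (hcnt : ∃ᶠ r in 𝓝[>] (0:ℝ), ldCount μ (lo r) (hi r) r ≤ ENNReal.ofReal (r ^ (-t))) :
    dimH E ≤ ENNReal.ofReal s := by
  set Em : ℕ → Set (Euc d) := fun m =>
    {x ∈ E | ∀ ρ : ℝ, 0 < ρ → ρ ≤ 1 / (m + 1) →
      lo ρ ≤ μ (closedBall x ρ) ∧ μ (closedBall x ρ) ≤ hi ρ} with hEmdef
  have hsub : E ⊆ ⋃ m, Em m := by
    intro x hx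
    obtain ⟨δ, hδpos, hδ⟩ := mem_nhdsGT_iff_exists_Ioc_subset.1 (hwin x hx)
    obtain ⟨m, hm⟩ := exists_nat_one_div_lt (show (0:ℝ) < δ from hδpos)
    exact mem_iUnion.2 ⟨m, hx, fun ρ hρ hρ2 => hδ ⟨hρ, le_trans hρ2 hm.le⟩⟩
  refine le_trans (dimH_mono hsub) ?_
  rw [dimH_iUnion]
  refine iSup_le fun m => ?_
  have hex : ∀ k : ℕ, ∃ r : ℝ, 0 < r ∧ r ≤ 1/(k+1) ∧ r ≤ 1/(m+1) ∧
      ldCount μ (lo r) (hi r) r ≤ ENNReal.ofReal (r ^ (-t)) := by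
    intro k
    have hioo : Ioo (0:ℝ) (min (1/(k+1)) (1/(m+1))) ∈ 𝓝[>] (0:ℝ) :=
      Ioo_mem_nhdsGT_of_mem ⟨le_refl 0, lt_min (one_div_succ_pos k) (one_div_succ_pos m)⟩
    obtain ⟨r, hr1, hr2⟩ := (hcnt.and_eventually (eventually_mem_set.2 hioo)).exists
    exact ⟨r, hr2.1, (le_min_iff.1 hr2.2.le).1, (le_min_iff.1 hr2.2.le).2, hr1⟩
  choose rr hrpos hrk hrm hcnt' using hex
  have hpack : ∀ k : ℕ, ∃ P : Set (Euc d),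
      ((P.encard : ℝ≥0∞)) ≤ ENNReal.ofReal ((rr k) ^ (-t)) ∧
      Em m ⊆ ⋃ p ∈ P, closedBall p (2 * rr k) := by
    intro k
    obtain ⟨P, hP1, hP2⟩ := pack_of_window (μ := μ) (S := Em m) (fun x hx => hE hx.1) (hrpos k)
      (fun x hx => hx.2 (rr k) (hrpos k) (hrm k))
    exact ⟨P, hP1.trans (hcnt' k), hP2⟩
  choose P hPenc hPcov using hpack
  exact dimH_le_of_covers ht hts hrpos hrk hPenc hPcov

/-! ### dyadic scales -/

def rho (n : ℕ) : ℝ := (1/2 : ℝ) ^ (n + 1)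

lemma rho_pos (n : ℕ) : 0 < rho n := by rw [rho]; positivity

lemma rho_le_one (n : ℕ) : rho n ≤ 1 := by
  rw [rho]
  exact pow_le_one₀ (by norm_num) (by norm_num)

lemma rho_lt_one (n : ℕ) : rho n < 1 := by
  rw [rho]
  exact pow_lt_one₀ (by norm_num) (by norm_num) (Nat.succ_ne_zero n)

lemma rho_anti {a b : ℕ} (h : a ≤ b) : rho b ≤ rho a :=
  pow_le_pow_of_le_one (by norm_num) (by norm_num) (by omega)

lemma rho_succ (n : ℕ) : rho (n + 1) = rho n / 2 := by
  rw [rho, rho, pow_succ]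
  ring

lemma tendsto_rho : Tendsto rho atTop (𝓝 0) := by
  have h := tendsto_pow_atTop_nhds_zero_of_lt_one (by norm_num : (0:ℝ) ≤ 1/2)
    (by norm_num : (1/2:ℝ) < 1)
  exact h.comp (tendsto_add_atTop_nat 1)

lemma exists_rho_le {δ : ℝ} (hδ : 0 < δ) : ∃ N, rho N ≤ δ := by
  obtain ⟨n, hn⟩ := exists_pow_lt_of_lt_one hδ (by norm_num : (1/2:ℝ) < 1)
  refine ⟨n, le_trans ?_ hn.le⟩
  exact pow_le_pow_of_le_one (by norm_num) (by norm_num) (by omega)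

/-- Find a dyadic scale just above `r` (`rho n / 2 < r ≤ rho n`). -/
lemma exists_rho_between {r : ℝ} (hr0 : 0 < r) {N : ℕ} (hrN : r ≤ rho N) :
    ∃ n, N ≤ n ∧ r ≤ rho n ∧ rho n / 2 < r := by
  have hex : ∃ k, rho k < r := by
    obtain ⟨k, hk⟩ := exists_pow_lt_of_lt_one hr0 (by norm_num : (1/2:ℝ) < 1)
    exact ⟨k, lt_of_le_of_lt (pow_le_pow_of_le_one (by norm_num) (by norm_num) (by omega)) hk⟩
  set k := Nat.find hex with hkdef
  have hk : rho k < r := Nat.find_spec hex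
  have hkN : N < k := by
    by_contra h
    push_neg at h
    exact absurd (lt_of_le_of_lt (hrN.trans (rho_anti h)) hk) (lt_irrefl r)
  refine ⟨k - 1, by omega, ?_, ?_⟩
  · have := Nat.find_min hex (m := k - 1) (by omega)
    push_neg at this
    exact this
  · have hks : k - 1 + 1 = k := by omega
    rw [← hks, rho_succ] at hk
    simpa [hks] using hk

/-- Find a dyadic scale just below `r` (`rho n ≤ r < 2 * rho n`). -/
lemma exists_rho_between' {r : ℝ} (hr0 : 0 < r) {N : ℕ} (hrN : r < rho N) :
    ∃ n, N ≤ n ∧ rho n ≤ r ∧ r < 2 * rho n := by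
  have hex : ∃ k, rho k ≤ r := by
    obtain ⟨k, hk⟩ := exists_pow_lt_of_lt_one hr0 (by norm_num : (1/2:ℝ) < 1)
    exact ⟨k, le_of_lt (lt_of_le_of_lt
      (pow_le_pow_of_le_one (by norm_num) (by norm_num) (by omega)) hk)⟩
  set k := Nat.find hex with hkdef
  have hk : rho k ≤ r := Nat.find_spec hex
  have hkN : N < k := by
    by_contra h
    push_neg at h
    exact absurd (lt_of_le_of_lt hk hrN) (not_lt.2 (rho_anti h))
  refine ⟨k, by omega, hk, ?_⟩
  have := Nat.find_min hex (m := k - 1) (by omega)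
  push_neg at this
  have hks : k - 1 + 1 = k := by omega
  have h2 : rho k = rho (k-1) / 2 := by conv_lhs => rw [← hks, rho_succ]
  rw [h2]
  linarith

end S11

namespace S11

variable {d : ℕ} {μ : Measure (Euc d)}

lemma rho_rpow_eq (n : ℕ) (e : ℝ) : rho n ^ e = ((1/2:ℝ) ^ e) ^ (n + 1) := by
  rw [rho, ← Real.rpow_natCast ((1/2:ℝ)) (n+1), ← Real.rpow_natCast ((1/2:ℝ)^e) (n+1),
    ← Real.rpow_mul (by norm_num), ← Real.rpow_mul (by norm_num), mul_comm]

lemma tail_sum_le {c e : ℝ} (hc : 0 ≤ c) (he : 0 < e) (N : ℕ) :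
    ∑' j : ℕ, ENNReal.ofReal (c * rho (N + j) ^ e)
      ≤ (ENNReal.ofReal c * (1 - ENNReal.ofReal ((1/2:ℝ)^e))⁻¹)
          * ENNReal.ofReal ((1/2:ℝ)^e) ^ (N+1) := by
  set q : ℝ := (1/2:ℝ) ^ e with hq
  have hq0 : 0 ≤ q := Real.rpow_nonneg (by norm_num) _
  set oq : ℝ≥0∞ := ENNReal.ofReal q with hoq
  have hterm : ∀ j : ℕ, ENNReal.ofReal (c * rho (N + j) ^ e)
      = (ENNReal.ofReal c * oq ^ (N+1)) * oq ^ j := by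
    intro j
    rw [rho_rpow_eq, ← hq, show N + j + 1 = (N + 1) + j by ring, pow_add,
      ENNReal.ofReal_mul hc, ENNReal.ofReal_mul (pow_nonneg hq0 _),
      ENNReal.ofReal_pow hq0, ENNReal.ofReal_pow hq0, hoq, mul_assoc]
  calc ∑' j : ℕ, ENNReal.ofReal (c * rho (N + j) ^ e)
      = ∑' j : ℕ, (ENNReal.ofReal c * oq ^ (N+1)) * oq ^ j := by
        exact tsum_congr hterm
    _ = (ENNReal.ofReal c * oq ^ (N+1)) * (1 - oq)⁻¹ := by
        rw [ENNReal.tsum_mul_left, ENNReal.tsum_geometric]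
    _ = (ENNReal.ofReal c * (1 - oq)⁻¹) * oq ^ (N+1) := by ring
    _ ≤ (ENNReal.ofReal c * (1 - oq)⁻¹) * oq ^ (N+1) := le_rfl

lemma tail_bound_tendsto {c e : ℝ} (he : 0 < e) :
    Tendsto (fun N : ℕ => (ENNReal.ofReal c * (1 - ENNReal.ofReal ((1/2:ℝ)^e))⁻¹)
      * ENNReal.ofReal ((1/2:ℝ)^e) ^ (N+1)) atTop (𝓝 0) := by
  set oq : ℝ≥0∞ := ENNReal.ofReal ((1/2:ℝ)^e) with hoq
  have hq1 : oq < 1 := by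
    rw [hoq]
    exact ENNReal.ofReal_lt_one.2 (Real.rpow_lt_one (by norm_num) (by norm_num) he)
  have hC : ENNReal.ofReal c * (1 - oq)⁻¹ ≠ ⊤ := by
    refine ENNReal.mul_ne_top ENNReal.ofReal_ne_top ?_
    refine ENNReal.inv_ne_top.2 ?_
    simp only [ne_eq, tsub_eq_zero_iff_le, not_le]
    exact hq1
  have hpow : Tendsto (fun N : ℕ => oq ^ (N+1)) atTop (𝓝 0) :=
    (ENNReal.tendsto_pow_atTop_nhds_zero_of_lt_one hq1).comp (tendsto_add_atTop_nat 1)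
  have := ENNReal.Tendsto.const_mul hpow (Or.inr hC)
  simpa using this

lemma engine2 [IsFiniteMeasure μ] {E : Set (Euc d)} (hE : E ⊆ msupp μ)
    {lo hi : ℝ → ℝ≥0∞} {t s : ℝ} (ht : 0 ≤ t) (hts : t < s)
    (hwin : ∀ x ∈ E, ∃ᶠ n : ℕ in atTop,
        lo (rho n) ≤ μ (closedBall x (rho n)) ∧ μ (closedBall x (rho n)) ≤ hi (rho n))
    (hcnt : ∀ᶠ r in 𝓝[>] (0:ℝ), ldCount μ (lo r) (hi r) r ≤ ENNReal.ofReal (r ^ (-t))) :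
    dimH E ≤ ENNReal.ofReal s := by
  have hs : 0 < s := lt_of_le_of_lt ht hts
  obtain ⟨δ, hδpos, hδ⟩ := mem_nhdsGT_iff_exists_Ioc_subset.1 hcnt
  obtain ⟨N₁, hN₁⟩ := exists_rho_le (δ := δ) hδpos
  set Sn : ℕ → Set (Euc d) := fun n =>
    {x ∈ E | lo (rho n) ≤ μ (closedBall x (rho n)) ∧ μ (closedBall x (rho n)) ≤ hi (rho n)}
    with hSndef
  have hpack : ∀ n : ℕ, ∃ P : Set (Euc d),
      ((P.encard : ℝ≥0∞)) ≤ ldCount μ (lo (rho n)) (hi (rho n)) (rho n) ∧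
      Sn n ⊆ ⋃ p ∈ P, closedBall p (2 * rho n) :=
    fun n => pack_of_window (μ := μ) (S := Sn n) (fun x hx => hE hx.1) (rho_pos n)
      (fun x hx => hx.2)
  choose P hPenc hPcov using hpack
  have hPenc' : ∀ n, N₁ ≤ n → ((P n).encard : ℝ≥0∞) ≤ ENNReal.ofReal ((rho n) ^ (-t)) := by
    intro n hn
    refine (hPenc n).trans (hδ ⟨rho_pos n, (rho_anti hn).trans hN₁⟩)
  have hfin : ∀ n, N₁ ≤ n → (P n).Finite := fun n hn =>
    encard_finite_of_le ENNReal.ofReal_ne_top (hPenc' n hn)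
  haveI hcnt_inst : ∀ N : ℕ, Countable ((j : ℕ) × ↥(P (N₁ + N + j))) := by
    intro N
    haveI : ∀ j : ℕ, Countable ↥(P (N₁ + N + j)) := fun j =>
      ((hfin _ (by omega)).countable).to_subtype
    infer_instance
  have hμH : μH[s] E ≤ liminf (fun N : ℕ => ∑' i : (j : ℕ) × ↥(P (N₁ + N + j)),
      EMetric.diam (closedBall (i.2 : Euc d) (2 * rho (N₁ + N + i.1))) ^ s) atTop := by
    refine MeasureTheory.Measure.hausdorffMeasure_le_liminf_tsum
      (ι := fun N : ℕ => (j : ℕ) × ↥(P (N₁ + N + j))) s E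
      (fun N => ENNReal.ofReal (4 * rho (N₁ + N))) ?_
      (fun N i => closedBall (i.2 : Euc d) (2 * rho (N₁ + N + i.1))) ?_ ?_
    · have hreal : Tendsto (fun N : ℕ => 4 * rho (N₁ + N)) atTop (𝓝 0) := by
        have := (tendsto_rho.comp (tendsto_add_atTop_nat N₁)).const_mul (4:ℝ)
        simpa [Function.comp, Nat.add_comm] using this
      have := (ENNReal.continuous_ofReal.tendsto 0).comp hreal
      simpa [Function.comp_def] using this
    · refine Eventually.of_forall fun N i => ?_
      have h := diam_closedBall_le' (i.2 : Euc d)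
        (by have := rho_pos (N₁ + N + i.1); linarith : (0:ℝ) ≤ 2 * rho (N₁ + N + i.1))
      refine h.trans ?_
      refine ENNReal.ofReal_le_ofReal ?_
      have := rho_anti (show N₁ + N ≤ N₁ + N + i.1 by omega)
      linarith
    · refine Eventually.of_forall fun N => ?_
      intro x hx
      obtain ⟨n, hn, hwn⟩ := ((hwin x hx).and_eventually (eventually_ge_atTop (N₁ + N))).exists
      have hxSn : x ∈ Sn n := ⟨hx, hn⟩
      obtain ⟨p, hp, hxp⟩ := mem_iUnion₂.1 (hPcov n hxSn)
      have hj : n = N₁ + N + (n - (N₁ + N)) := by omega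
      rw [hj] at hp hxp
      exact mem_iUnion.2 ⟨⟨n - (N₁ + N), ⟨p, hp⟩⟩, hxp⟩
  have hbound : ∀ N : ℕ, (∑' i : (j : ℕ) × ↥(P (N₁ + N + j)),
      EMetric.diam (closedBall (i.2 : Euc d) (2 * rho (N₁ + N + i.1))) ^ s)
      ≤ (ENNReal.ofReal (4^s) * (1 - ENNReal.ofReal ((1/2:ℝ)^(s-t)))⁻¹)
          * ENNReal.ofReal ((1/2:ℝ)^(s-t)) ^ (N₁ + N + 1) := by
    intro N
    calc (∑' i : (j : ℕ) × ↥(P (N₁ + N + j)),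
        EMetric.diam (closedBall (i.2 : Euc d) (2 * rho (N₁ + N + i.1))) ^ s)
        = ∑' j : ℕ, ∑' p : ↥(P (N₁ + N + j)),
            EMetric.diam (closedBall (p : Euc d) (2 * rho (N₁ + N + j))) ^ s := by
          exact ENNReal.tsum_sigma' _
      _ ≤ ∑' j : ℕ, ENNReal.ofReal (4^s * rho ((N₁ + N) + j) ^ (s - t)) := by
          refine ENNReal.tsum_le_tsum fun j => ?_
          have := cover_sum_le (rho_pos (N₁ + N + j)) hs.le (hPenc' (N₁ + N + j) (by omega))
          simpa [show N₁ + N + j = (N₁ + N) + j by ring] using this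
      _ ≤ _ := by
          have := tail_sum_le (c := 4^s) (Real.rpow_nonneg (by norm_num) _)
            (show (0:ℝ) < s - t by linarith) (N₁ + N)
          simpa [show N₁ + N + 1 = (N₁ + N) + 1 by ring] using this
  have hliminf : liminf (fun N : ℕ => ∑' i : (j : ℕ) × ↥(P (N₁ + N + j)),
      EMetric.diam (closedBall (i.2 : Euc d) (2 * rho (N₁ + N + i.1))) ^ s) atTop ≤ 0 := by
    have htend := tail_bound_tendsto (c := 4^s) (show (0:ℝ) < s - t by linarith)
    have htend' : Tendsto (fun N : ℕ =>
        (ENNReal.ofReal (4^s) * (1 - ENNReal.ofReal ((1/2:ℝ)^(s-t)))⁻¹)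
          * ENNReal.ofReal ((1/2:ℝ)^(s-t)) ^ (N₁ + N + 1)) atTop (𝓝 0) := by
      have := htend.comp (tendsto_add_atTop_nat N₁)
      simpa [Function.comp_def, Nat.add_comm] using this
    calc _ ≤ liminf (fun N : ℕ =>
          (ENNReal.ofReal (4^s) * (1 - ENNReal.ofReal ((1/2:ℝ)^(s-t)))⁻¹)
            * ENNReal.ofReal ((1/2:ℝ)^(s-t)) ^ (N₁ + N + 1)) atTop :=
          liminf_le_liminf (Eventually.of_forall hbound)
      _ = 0 := htend'.liminf_eq
  have hzero : μH[s] E = 0 := le_antisymm (hμH.trans hliminf) zero_le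
  have : dimH E ≤ (s.toNNReal : ℝ≥0∞) := by
    refine dimH_le_of_hausdorffMeasure_ne_top ?_
    rw [show ((s.toNNReal : ℝ)) = s from Real.coe_toNNReal s hs.le, hzero]
    exact ENNReal.zero_ne_top
  simpa [ENNReal.ofReal] using this

end S11

namespace S11

variable {d : ℕ} {μ : Measure (Euc d)}

lemma rpowE_coe_add (r a ε : ℝ) :
    rpowE r ((a : EReal) + (ε : EReal)) = ENNReal.ofReal (r ^ (a + ε)) := by
  rw [← EReal.coe_add, rpowE_coe]

lemma rpowE_coe_sub (r a ε : ℝ) :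
    rpowE r ((a : EReal) - (ε : EReal)) = ENNReal.ofReal (r ^ (a - ε)) := by
  rw [← EReal.coe_sub, rpowE_coe]

lemma rpowE_top_add (r ε : ℝ) : rpowE r ((⊤ : EReal) + (ε : EReal)) = 0 := by
  rw [EReal.top_add_coe, rpowE_top]

lemma eventually_Ioo01 : ∀ᶠ r in 𝓝[>] (0:ℝ), 0 < r ∧ r < 1 := by
  filter_upwards [Ioo_mem_nhdsGT_of_mem (by constructor <;> norm_num :
    (0:ℝ) ∈ Ico (0:ℝ) 1)] with r hr
  exact ⟨hr.1, hr.2⟩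

/-- eventual upper window from `dLow = a`. -/
lemma win_upper_of_dLow [IsFiniteMeasure μ] {x : Euc d} (hx : x ∈ msupp μ) {a ε : ℝ}
    (hd : dLow μ x = ((a : ℝ) : EReal)) (hε : 0 < ε) :
    ∀ᶠ r in 𝓝[>] (0:ℝ), μ (closedBall x r) ≤ ENNReal.ofReal (r ^ (a - ε)) := by
  have hlt : (((a - ε : ℝ)) : EReal) < dLow μ x := by
    rw [hd]; exact_mod_cast (by linarith : a - ε < a)
  have hev := eventually_lt_of_lt_liminf (hlt.trans_eq rfl)
  filter_upwards [hev, eventually_Ioo01] with r h1 h2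
  exact ball_le_of_lt hx h2.1 h2.2 h1

/-- eventual upper window from `dLow = ⊤`. -/
lemma win_upper_of_dLow_top [IsFiniteMeasure μ] {x : Euc d} (hx : x ∈ msupp μ) {A : ℝ}
    (hd : dLow μ x = (⊤ : EReal)) :
    ∀ᶠ r in 𝓝[>] (0:ℝ), μ (closedBall x r) ≤ ENNReal.ofReal (r ^ A) := by
  have hlt : ((A : ℝ) : EReal) < dLow μ x := by rw [hd]; exact EReal.coe_lt_top A
  have hev := eventually_lt_of_lt_liminf hlt
  filter_upwards [hev, eventually_Ioo01] with r h1 h2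
  exact ball_le_of_lt hx h2.1 h2.2 h1

/-- frequent lower window from `dLow = a`. -/
lemma freq_lower_of_dLow [IsFiniteMeasure μ] {x : Euc d} (hx : x ∈ msupp μ) {a ε : ℝ}
    (hd : dLow μ x = ((a : ℝ) : EReal)) (hε : 0 < ε) :
    ∃ᶠ r in 𝓝[>] (0:ℝ), (0 < r ∧ r < 1) ∧
      ENNReal.ofReal (r ^ (a + ε)) ≤ μ (closedBall x r) := by
  have hlt : dLow μ x < ((a + ε : ℝ) : EReal) := by
    rw [hd]; exact_mod_cast (by linarith : a < a + ε)
  have hfr := frequently_lt_of_liminf_lt (by isBoundedDefault) hlt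
  refine (hfr.and_eventually eventually_Ioo01).mono ?_
  rintro r ⟨h1, h2⟩
  exact ⟨h2, le_ball_of_lt hx h2.1 h2.2 h1⟩

/-- eventual lower window from `dUp = b`. -/
lemma win_lower_of_dUp [IsFiniteMeasure μ] {x : Euc d} (hx : x ∈ msupp μ) {b ε : ℝ}
    (hd : dUp μ x = ((b : ℝ) : EReal)) (hε : 0 < ε) :
    ∀ᶠ r in 𝓝[>] (0:ℝ), ENNReal.ofReal (r ^ (b + ε)) ≤ μ (closedBall x r) := by
  have hlt : dUp μ x < ((b + ε : ℝ) : EReal) := by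
    rw [hd]; exact_mod_cast (by linarith : b < b + ε)
  have hev := eventually_lt_of_limsup_lt hlt
  filter_upwards [hev, eventually_Ioo01] with r h1 h2
  exact le_ball_of_lt hx h2.1 h2.2 h1

/-- frequent upper window from `dUp = b`. -/
lemma freq_upper_of_dUp [IsFiniteMeasure μ] {x : Euc d} (hx : x ∈ msupp μ) {b ε : ℝ}
    (hd : dUp μ x = ((b : ℝ) : EReal)) (hε : 0 < ε) :
    ∃ᶠ r in 𝓝[>] (0:ℝ), (0 < r ∧ r < 1) ∧
      μ (closedBall x r) ≤ ENNReal.ofReal (r ^ (b - ε)) := by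
    have hlt : (((b - ε : ℝ)) : EReal) < dUp μ x := by
      rw [hd]; exact_mod_cast (by linarith : b - ε < b)
    have hfr := frequently_lt_of_lt_limsup (by isBoundedDefault) hlt
    refine (hfr.and_eventually eventually_Ioo01).mono ?_
    rintro r ⟨h1, h2⟩
    exact ⟨h2, ball_le_of_lt hx h2.1 h2.2 h1⟩

/-- frequent upper window from `dUp = ⊤`. -/
lemma freq_upper_of_dUp_top [IsFiniteMeasure μ] {x : Euc d} (hx : x ∈ msupp μ) {A : ℝ}
    (hd : dUp μ x = (⊤ : EReal)) :
    ∃ᶠ r in 𝓝[>] (0:ℝ), (0 < r ∧ r < 1) ∧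
      μ (closedBall x r) ≤ ENNReal.ofReal (r ^ A) := by
    have hlt : ((A : ℝ) : EReal) < dUp μ x := by rw [hd]; exact EReal.coe_lt_top A
    have hfr := frequently_lt_of_lt_limsup (by isBoundedDefault) hlt
    refine (hfr.and_eventually eventually_Ioo01).mono ?_
    rintro r ⟨h1, h2⟩
    exact ⟨h2, ball_le_of_lt hx h2.1 h2.2 h1⟩

/-! ### nonnegativity of the count exponents -/

lemma elog_nonneg {N : ℝ≥0∞} (h : 1 ≤ N) : (0 : EReal) ≤ elog N := by
  rcases eq_or_ne N ⊤ with rfl | hne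
  · simp [elog]
  have hN0 : N ≠ 0 := by intro h0; rw [h0] at h; simp at h
  rw [elog_real hN0 hne]
  have h1 : (1:ℝ) ≤ N.toReal := by
    rw [show (1:ℝ) = (1:ℝ≥0∞).toReal by simp]
    exact ENNReal.toReal_mono hne h
  exact_mod_cast Real.log_nonneg h1

lemma count_term_nonneg {N : ℝ≥0∞} {r : ℝ} (h : 1 ≤ N) (h0 : 0 < r) (h1 : r < 1) :
    (0 : EReal) ≤ elog N * (((-Real.log r)⁻¹ : ℝ) : EReal) := by
  have hc : (0 : EReal) ≤ (((-Real.log r)⁻¹ : ℝ) : EReal) := by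
    have hl := Real.log_neg h0 h1
    have : (0:ℝ) ≤ (-Real.log r)⁻¹ := le_of_lt (inv_pos.2 (by linarith))
    exact_mod_cast this
  exact mul_nonneg (elog_nonneg h) hc

end S11

namespace S11

variable {d : ℕ} {μ : Measure (Euc d)}

/-- dyadic window from `dLow = a` (frequent lower bound, eventual upper bound). -/
lemma dyadic_win_low [IsFiniteMeasure μ] {x : Euc d} (hx : x ∈ msupp μ) {a ε : ℝ}
    (ha : 0 ≤ a) (hd : dLow μ x = ((a : ℝ) : EReal)) (hε : 0 < ε) :
    ∃ᶠ n : ℕ in atTop,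
      ENNReal.ofReal (rho n ^ (a + ε)) ≤ μ (closedBall x (rho n)) ∧
      μ (closedBall x (rho n)) ≤ ENNReal.ofReal (rho n ^ (a - ε)) := by
  rw [frequently_atTop]
  intro N
  obtain ⟨δ₁, hδ₁pos, hδ₁⟩ := mem_nhdsGT_iff_exists_Ioc_subset.1
    (win_upper_of_dLow hx hd hε)
  set θ : ℝ := ((2:ℝ) ^ (-(a + ε/2))) ^ (2/ε) with hθdef
  have h2pos : (0:ℝ) < (2:ℝ) ^ (-(a + ε/2)) := Real.rpow_pos_of_pos two_pos _
  have hθpos : 0 < θ := Real.rpow_pos_of_pos h2pos _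
  have hθprop : ∀ ρ : ℝ, 0 < ρ → ρ ≤ θ → ρ ^ (ε/2) ≤ (2:ℝ) ^ (-(a + ε/2)) := by
    intro ρ hρ hρθ
    have h1 : ρ ^ (ε/2) ≤ θ ^ (ε/2) := Real.rpow_le_rpow hρ.le hρθ (by positivity)
    have h2 : θ ^ (ε/2) = (2:ℝ) ^ (-(a + ε/2)) := by
      rw [hθdef, ← Real.rpow_mul h2pos.le, show (2/ε) * (ε/2) = 1 by field_simp,
        Real.rpow_one]
    rwa [h2] at h1
  obtain ⟨N', hN'⟩ := exists_rho_le (lt_min hδ₁pos hθpos)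
  set M := max N N' with hM
  have hρM : rho M ≤ min δ₁ θ := (rho_anti (le_max_right N N')).trans hN'
  obtain ⟨r, ⟨⟨hr0, hr1⟩, hrlow⟩, hrM⟩ :=
    ((freq_lower_of_dLow hx hd (half_pos hε)).and_eventually
      (eventually_mem_set.2 (Ioo_mem_nhdsGT_of_mem ⟨le_refl (0:ℝ), rho_pos M⟩))).exists
  obtain ⟨n, hnM, hrn, hrn2⟩ := exists_rho_between hr0 hrM.2.le
  have hρn := rho_pos n
  have hρθ : rho n ≤ θ := le_trans (le_trans (rho_anti hnM) hρM) (min_le_right _ _)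
  refine ⟨n, le_trans (le_max_left N N') hnM, ?_, ?_⟩
  · have hmono : μ (closedBall x r) ≤ μ (closedBall x (rho n)) :=
      measure_mono (closedBall_subset_closedBall hrn)
    refine le_trans ?_ (le_trans hrlow hmono)
    refine ENNReal.ofReal_le_ofReal ?_
    have h1 : (rho n / 2) ^ (a + ε/2) ≤ r ^ (a + ε/2) :=
      Real.rpow_le_rpow (by linarith) hrn2.le (by linarith)
    refine le_trans ?_ h1
    have h2 : (rho n / 2) ^ (a + ε/2) = rho n ^ (a + ε/2) * (2:ℝ) ^ (-(a + ε/2)) := by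
      rw [show rho n / 2 = rho n * (2:ℝ)⁻¹ by ring,
        Real.mul_rpow hρn.le (by norm_num), Real.inv_rpow (by norm_num),
        ← Real.rpow_neg (by norm_num)]
    rw [h2]
    have h3 : rho n ^ (ε/2) ≤ (2:ℝ) ^ (-(a + ε/2)) := hθprop _ hρn hρθ
    calc rho n ^ (a + ε) = rho n ^ (a + ε/2) * rho n ^ (ε/2) := by
          rw [← Real.rpow_add hρn]; congr 1; ring
      _ ≤ rho n ^ (a + ε/2) * (2:ℝ) ^ (-(a + ε/2)) :=
          mul_le_mul_of_nonneg_left h3 (Real.rpow_nonneg hρn.le _)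
  · exact hδ₁ ⟨rho_pos n, le_trans (le_trans (rho_anti hnM) hρM) (min_le_left _ _)⟩

/-- dyadic window from `dUp = b` (frequent upper bound, eventual lower bound). -/
lemma dyadic_win_up [IsFiniteMeasure μ] {x : Euc d} (hx : x ∈ msupp μ) {b ε : ℝ}
    (hd : dUp μ x = ((b : ℝ) : EReal)) (hε : 0 < ε) :
    ∃ᶠ n : ℕ in atTop,
      ENNReal.ofReal (rho n ^ (b + ε)) ≤ μ (closedBall x (rho n)) ∧
      μ (closedBall x (rho n)) ≤ ENNReal.ofReal (rho n ^ (b - ε)) := by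
  rw [frequently_atTop]
  intro N
  obtain ⟨δ₁, hδ₁pos, hδ₁⟩ := mem_nhdsGT_iff_exists_Ioc_subset.1
    (win_lower_of_dUp hx hd hε)
  set e : ℝ := b - ε/2 with hedef
  have h2pos : (0:ℝ) < (2:ℝ) ^ (-e) := Real.rpow_pos_of_pos two_pos _
  set θ : ℝ := min 1 (((2:ℝ) ^ (-e)) ^ (2/ε)) with hθdef
  have hθpos : 0 < θ := lt_min one_pos (Real.rpow_pos_of_pos h2pos _)
  have hkey : ∀ ρ r : ℝ, 0 < ρ → ρ ≤ θ → ρ ≤ r → r < 2 * ρ → r ^ e ≤ ρ ^ (b - ε) := by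
    intro ρ r hρ hρθ hρr hr2
    have hρ1 : ρ ≤ 1 := hρθ.trans (min_le_left _ _)
    have hr0 : 0 < r := lt_of_lt_of_le hρ hρr
    rcases le_or_gt 0 e with he | he
    · have h1 : r ^ e ≤ (2*ρ) ^ e := Real.rpow_le_rpow hr0.le hr2.le he
      have h2 : (2*ρ) ^ e = 2 ^ e * ρ ^ e := Real.mul_rpow (by norm_num) hρ.le
      have h3 : ρ ^ (ε/2) ≤ (2:ℝ) ^ (-e) := by
        have h4 := Real.rpow_le_rpow hρ.le (hρθ.trans (min_le_right _ _))
          (le_of_lt (half_pos hε))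
        rwa [← Real.rpow_mul h2pos.le, show (2/ε) * (ε/2) = 1 by field_simp,
          Real.rpow_one] at h4
      have h5 : ρ ^ e = ρ ^ (b - ε) * ρ ^ (ε/2) := by
        rw [← Real.rpow_add hρ]; congr 1; rw [hedef]; ring
      calc r ^ e ≤ 2 ^ e * ρ ^ e := by rw [← h2]; exact h1
        _ = 2 ^ e * ρ ^ (ε/2) * ρ ^ (b - ε) := by rw [h5]; ring
        _ ≤ 2 ^ e * 2 ^ (-e) * ρ ^ (b - ε) := by
            refine mul_le_mul_of_nonneg_right
              (mul_le_mul_of_nonneg_left h3 (Real.rpow_nonneg (by norm_num) _))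
              (Real.rpow_nonneg hρ.le _)
        _ = ρ ^ (b - ε) := by
            rw [← Real.rpow_add two_pos]
            norm_num
    · have h1 : r ^ e ≤ ρ ^ e := Real.rpow_le_rpow_of_nonpos hρ hρr he.le
      have h2 : ρ ^ e ≤ ρ ^ (b - ε) :=
        Real.rpow_le_rpow_of_exponent_ge hρ hρ1 (by rw [hedef]; linarith)
      linarith
  obtain ⟨N', hN'⟩ := exists_rho_le (lt_min hδ₁pos hθpos)
  set M := max N N' with hM
  have hρM : rho M ≤ min δ₁ θ := (rho_anti (le_max_right N N')).trans hN'
  obtain ⟨r, ⟨⟨hr0, hr1⟩, hrup⟩, hrM⟩ :=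
    ((freq_upper_of_dUp hx hd (half_pos hε)).and_eventually
      (eventually_mem_set.2 (Ioo_mem_nhdsGT_of_mem ⟨le_refl (0:ℝ), rho_pos M⟩))).exists
  obtain ⟨n, hnM, hρnr, hr2ρ⟩ := exists_rho_between' hr0 hrM.2
  have hρn := rho_pos n
  have hρnM : rho n ≤ rho M := le_trans hρnr hrM.2.le
  refine ⟨n, le_trans (le_max_left N N') hnM, ?_, ?_⟩
  · exact hδ₁ ⟨rho_pos n, le_trans (le_trans hρnM hρM) (min_le_left _ _)⟩
  · have hmono : μ (closedBall x (rho n)) ≤ μ (closedBall x r) :=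
      measure_mono (closedBall_subset_closedBall hρnr)
    refine le_trans (le_trans hmono hrup) (ENNReal.ofReal_le_ofReal ?_)
    exact hkey (rho n) r hρn (le_trans (le_trans hρnM hρM) (min_le_right _ _)) hρnr hr2ρ

/-- dyadic upper window from `dUp = ⊤`. -/
lemma dyadic_win_top [IsFiniteMeasure μ] {x : Euc d} (hx : x ∈ msupp μ)
    (hd : dUp μ x = (⊤ : EReal)) (A : ℝ) :
    ∃ᶠ n : ℕ in atTop, μ (closedBall x (rho n)) ≤ ENNReal.ofReal (rho n ^ A) := by
  rw [frequently_atTop]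
  intro N
  set A' : ℝ := max A 0 + 1 with hA'def
  set θ : ℝ := min 1 ((2:ℝ) ^ (-A')) with hθdef
  have hθpos : 0 < θ := lt_min one_pos (Real.rpow_pos_of_pos two_pos _)
  have hkey : ∀ ρ r : ℝ, 0 < ρ → ρ ≤ θ → ρ ≤ r → r < 2 * ρ → r ^ A' ≤ ρ ^ A := by
    intro ρ r hρ hρθ hρr hr2
    have hρ1 : ρ ≤ 1 := hρθ.trans (min_le_left _ _)
    have hr0 : 0 < r := lt_of_lt_of_le hρ hρr
    rcases le_or_gt 0 A with hA | hA
    · have hA'eq : A' = A + 1 := by rw [hA'def, max_eq_left hA]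
      have h1 : r ^ A ≤ (2*ρ) ^ A := Real.rpow_le_rpow hr0.le hr2.le hA
      have h2 : (2*ρ) ^ A = 2 ^ A * ρ ^ A := Real.mul_rpow (by norm_num) hρ.le
      have hρθ2 : ρ ≤ (2:ℝ) ^ (-A') := hρθ.trans (min_le_right _ _)
      have h3 : (2:ℝ) ^ A' * ρ ≤ 1 := by
        calc (2:ℝ) ^ A' * ρ ≤ (2:ℝ) ^ A' * (2:ℝ) ^ (-A') :=
              mul_le_mul_of_nonneg_left hρθ2 (Real.rpow_nonneg (by norm_num) _)
          _ = 1 := by rw [← Real.rpow_add two_pos]; norm_num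
      have h4 : r ^ A' = r ^ A * r := by
        rw [hA'eq, Real.rpow_add hr0, Real.rpow_one]
      have h5 : (2:ℝ) ^ A' = 2 ^ A * 2 := by
        rw [hA'eq, Real.rpow_add two_pos, Real.rpow_one]
      calc r ^ A' = r ^ A * r := h4
        _ ≤ (2 ^ A * ρ ^ A) * (2 * ρ) := by
            refine mul_le_mul (by rw [← h2]; exact h1) hr2.le hr0.le ?_
            positivity
        _ = ((2:ℝ) ^ A' * ρ) * ρ ^ A := by rw [h5]; ring
        _ ≤ 1 * ρ ^ A :=
            mul_le_mul_of_nonneg_right h3 (Real.rpow_nonneg hρ.le _)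
        _ = ρ ^ A := one_mul _
    · have hA'eq : A' = 1 := by rw [hA'def, max_eq_right hA.le]; ring
      have h1 : r ^ A' ≤ 1 := by
        rw [hA'eq, Real.rpow_one]
        have hm : θ ≤ (2:ℝ) ^ (-A') := min_le_right _ _
        have h2A : (2:ℝ) ^ (-A') ≤ 1/2 := by
          rw [hA'eq, show (-(1:ℝ)) = (-1 : ℝ) by norm_num]
          rw [show ((-1 : ℝ)) = -(1:ℝ) by norm_num, Real.rpow_neg (by norm_num),
            Real.rpow_one]
          norm_num
        have : r < 1 := by
          calc r < 2 * ρ := hr2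
            _ ≤ 2 * θ := by linarith
            _ ≤ 1 := by linarith
        exact this.le
      have h2 : (1:ℝ) ≤ ρ ^ A := by
        calc (1:ℝ) = ρ ^ (0:ℝ) := (Real.rpow_zero ρ).symm
          _ ≤ ρ ^ A := Real.rpow_le_rpow_of_exponent_ge hρ hρ1 hA.le
      linarith
  obtain ⟨N', hN'⟩ := exists_rho_le hθpos
  set M := max N N' with hM
  have hρM : rho M ≤ θ := (rho_anti (le_max_right N N')).trans hN'
  obtain ⟨r, ⟨⟨hr0, hr1⟩, hrup⟩, hrM⟩ :=
    ((freq_upper_of_dUp_top (A := A') hx hd).and_eventually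
      (eventually_mem_set.2 (Ioo_mem_nhdsGT_of_mem ⟨le_refl (0:ℝ), rho_pos M⟩))).exists
  obtain ⟨n, hnM, hρnr, hr2ρ⟩ := exists_rho_between' hr0 hrM.2
  have hρn := rho_pos n
  have hρnM : rho n ≤ rho M := le_trans hρnr hrM.2.le
  refine ⟨n, le_trans (le_max_left N N') hnM, ?_⟩
  have hmono : μ (closedBall x (rho n)) ≤ μ (closedBall x r) :=
    measure_mono (closedBall_subset_closedBall hρnr)
  refine le_trans (le_trans hmono hrup) (ENNReal.ofReal_le_ofReal ?_)
  exact hkey (rho n) r hρn (le_trans hρnM hρM) hρnr hr2ρ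

end S11

namespace S11

variable {d : ℕ} {μ : Measure (Euc d)}

lemma count_bound_of_limsup_lt {lo hi : ℝ → ℝ≥0∞} {t : ℝ}
    (h : limsup (fun r : ℝ =>
        elog (ldCount μ (lo r) (hi r) r) * (((-Real.log r)⁻¹ : ℝ) : EReal)) (𝓝[>] (0:ℝ))
      < (t : EReal)) :
    ∀ᶠ r in 𝓝[>] (0:ℝ), ldCount μ (lo r) (hi r) r ≤ ENNReal.ofReal (r ^ (-t)) := by
  filter_upwards [eventually_lt_of_limsup_lt h, eventually_Ioo01] with r h1 h2
  exact count_le_of_lt h2.1 h2.2 h1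

lemma count_bound_of_liminf_lt {lo hi : ℝ → ℝ≥0∞} {t : ℝ}
    (h : liminf (fun r : ℝ =>
        elog (ldCount μ (lo r) (hi r) r) * (((-Real.log r)⁻¹ : ℝ) : EReal)) (𝓝[>] (0:ℝ))
      < (t : EReal)) :
    ∃ᶠ r in 𝓝[>] (0:ℝ), ldCount μ (lo r) (hi r) r ≤ ENNReal.ofReal (r ^ (-t)) := by
  refine ((frequently_lt_of_liminf_lt (by isBoundedDefault) h).and_eventually
    eventually_Ioo01).mono ?_
  rintro r ⟨h1, h2⟩
  exact count_le_of_lt h2.1 h2.2 h1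

lemma limsup_count_nonneg {lo hi : ℝ → ℝ≥0∞} {x : Euc d} (hx : x ∈ msupp μ)
    (hwin : ∃ᶠ r in 𝓝[>] (0:ℝ),
      lo r ≤ μ (closedBall x r) ∧ μ (closedBall x r) ≤ hi r) :
    (0 : EReal) ≤ limsup (fun r : ℝ =>
      elog (ldCount μ (lo r) (hi r) r) * (((-Real.log r)⁻¹ : ℝ) : EReal)) (𝓝[>] (0:ℝ)) := by
  refine le_limsup_of_frequently_le ?_
  refine (hwin.and_eventually eventually_Ioo01).mono ?_
  rintro r ⟨h1, h2⟩
  exact count_term_nonneg (one_le_ldCount hx h1.1 h1.2) h2.1 h2.2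

lemma liminf_count_nonneg {lo hi : ℝ → ℝ≥0∞} {x : Euc d} (hx : x ∈ msupp μ)
    (hwin : ∀ᶠ r in 𝓝[>] (0:ℝ),
      lo r ≤ μ (closedBall x r) ∧ μ (closedBall x r) ≤ hi r) :
    (0 : EReal) ≤ liminf (fun r : ℝ =>
      elog (ldCount μ (lo r) (hi r) r) * (((-Real.log r)⁻¹ : ℝ) : EReal)) (𝓝[>] (0:ℝ)) := by
  refine le_liminf_of_le (by isBoundedDefault) ?_
  filter_upwards [hwin, eventually_Ioo01] with r h1 h2
  exact count_term_nonneg (one_le_ldCount hx h1.1 h1.2) h2.1 h2.2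

lemma dimHE_empty_le {F : EReal} : dimHE (∅ : Set (Euc d)) ≤ F := by
  rw [dimHE, if_pos rfl]
  exact bot_le

lemma glue {E : Set (Euc d)} (hne : E.Nonempty) {F : EReal} (hF : 0 ≤ F)
    (h : ∀ s : ℝ, 0 < s → F < (s : EReal) → dimH E ≤ ENNReal.ofReal s) : dimHE E ≤ F := by
  rw [dimHE, if_neg (nonempty_iff_ne_empty.1 hne)]
  by_contra hlt
  push_neg at hlt
  obtain ⟨s, hs1, hs2⟩ := EReal.exists_between_coe_real hlt
  have hs0 : (0:ℝ) < s := by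
    have h2 : (0:EReal) < (s:EReal) := lt_of_le_of_lt hF hs1
    exact_mod_cast h2
  have hd := h s hs0 hs1
  have h3 : ((ENNReal.ofReal s : ℝ≥0∞) : EReal) < ((dimH E : ℝ≥0∞) : EReal) := by
    rw [EReal.coe_ennreal_ofReal, max_eq_left hs0.le]
    exact hs2
  rw [EReal.coe_ennreal_lt_coe_ennreal_iff] at h3
  exact absurd hd (not_le.2 h3)

end S11

namespace S11

variable {d : ℕ} {μ : Measure (Euc d)}

lemma mem_Eab {α β : EReal} {x : Euc d} (hx : x ∈ Eab μ α β) :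
    x ∈ msupp μ ∧ dLow μ x = α ∧ dUp μ x = β := hx

lemma ereal_ne_bot_of_nonneg {α : EReal} (h0 : 0 ≤ α) : α ≠ ⊥ := by
  intro h
  rw [h] at h0
  exact absurd h0 (by simp)

lemma bound1 [IsFiniteMeasure μ] {α β : EReal} (h0 : 0 ≤ α) (hab : α ≤ β) :
    dimHE (Eab μ α β) ≤ fLDup μ α := by
  rcases (Eab μ α β).eq_empty_or_nonempty with he | hne
  · rw [he]; exact dimHE_empty_le
  obtain ⟨x₀, hx₀⟩ := hne
  obtain ⟨hx₀s, hx₀l, _⟩ := mem_Eab hx₀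
  by_cases hα : α = ⊤
  · subst hα
    rw [fLDup, if_pos rfl]
    have hnn : ∀ A : ℝ, (0:EReal) ≤ limsup (fun r : ℝ =>
        elog (ldCount μ 0 (ENNReal.ofReal (r ^ A)) r) * (((-Real.log r)⁻¹ : ℝ) : EReal))
        (𝓝[>] (0:ℝ)) := by
      intro A
      refine limsup_count_nonneg (lo := fun _ => (0:ℝ≥0∞))
        (hi := fun r => ENNReal.ofReal (r ^ A)) hx₀s ?_
      exact ((win_upper_of_dLow_top hx₀s hx₀l (A := A)).mono
        fun r h => ⟨zero_le, h⟩).frequently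
    refine glue ⟨x₀, hx₀⟩ (le_iInf hnn) ?_
    intro s hs hFs
    obtain ⟨A, hA⟩ := iInf_lt_iff.1 hFs
    obtain ⟨t, ht1, ht2⟩ := EReal.exists_between_coe_real hA
    have ht0 : (0:ℝ) ≤ t := by
      have := lt_of_le_of_lt (hnn A) ht1
      exact_mod_cast this.le
    have hts : t < s := by exact_mod_cast ht2
    have hcnt := count_bound_of_limsup_lt (lo := fun _ => (0:ℝ≥0∞))
      (hi := fun r => ENNReal.ofReal (r ^ A)) ht1
    refine engine1 (fun x hx => (mem_Eab hx).1) ht0 hts ?_ hcnt.frequently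
    intro x hx
    exact (win_upper_of_dLow_top (mem_Eab hx).1 (mem_Eab hx).2.1 (A := A)).mono
      fun r h => ⟨zero_le, h⟩
  · have hαb : α ≠ ⊥ := ereal_ne_bot_of_nonneg h0
    obtain ⟨a, rfl⟩ : ∃ a : ℝ, α = (a : EReal) :=
      ⟨α.toReal, (EReal.coe_toReal hα hαb).symm⟩
    have ha : 0 ≤ a := by exact_mod_cast h0
    rw [fLDup, if_neg (EReal.coe_ne_top a)]
    have hnn : ∀ ε : ℝ, 0 < ε → (0:EReal) ≤ limsup (fun r : ℝ =>
        elog (ldCount μ (rpowE r ((a:EReal) + (ε:EReal))) (rpowE r ((a:EReal) - (ε:EReal))) r)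
          * (((-Real.log r)⁻¹ : ℝ) : EReal)) (𝓝[>] (0:ℝ)) := by
      intro ε hε
      refine limsup_count_nonneg (lo := fun r => rpowE r ((a:EReal) + (ε:EReal)))
        (hi := fun r => rpowE r ((a:EReal) - (ε:EReal))) hx₀s ?_
      refine ((freq_lower_of_dLow hx₀s hx₀l hε).and_eventually
        (win_upper_of_dLow hx₀s hx₀l hε)).mono ?_
      rintro r ⟨⟨_, hlo⟩, hup⟩
      exact ⟨by simp only [rpowE_coe_add]; exact hlo, by simp only [rpowE_coe_sub]; exact hup⟩
    refine glue ⟨x₀, hx₀⟩ (le_iInf fun ε => le_iInf fun hε => hnn ε hε) ?_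
    intro s hs hFs
    obtain ⟨ε, hε'⟩ := iInf_lt_iff.1 hFs
    obtain ⟨hε, hlim⟩ := iInf_lt_iff.1 hε'
    obtain ⟨t, ht1, ht2⟩ := EReal.exists_between_coe_real hlim
    have ht0 : (0:ℝ) ≤ t := by
      have := lt_of_le_of_lt (hnn ε hε) ht1
      exact_mod_cast this.le
    have hts : t < s := by exact_mod_cast ht2
    have hcnt := count_bound_of_limsup_lt (lo := fun r => rpowE r ((a:EReal) + (ε:EReal)))
      (hi := fun r => rpowE r ((a:EReal) - (ε:EReal))) ht1
    refine engine2 (fun x hx => (mem_Eab hx).1) ht0 hts ?_ hcnt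
    intro x hx
    refine (dyadic_win_low (mem_Eab hx).1 ha (mem_Eab hx).2.1 hε).mono ?_
    rintro n ⟨hl, hu⟩
    exact ⟨by simp only [rpowE_coe_add]; exact hl, by simp only [rpowE_coe_sub]; exact hu⟩

lemma bound2 [IsFiniteMeasure μ] {α β : EReal} (h0 : 0 ≤ α) (hab : α ≤ β) :
    dimHE (Eab μ α β) ≤ fLDup μ β := by
  rcases (Eab μ α β).eq_empty_or_nonempty with he | hne
  · rw [he]; exact dimHE_empty_le
  obtain ⟨x₀, hx₀⟩ := hne
  obtain ⟨hx₀s, _, hx₀u⟩ := mem_Eab hx₀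
  by_cases hβ : β = ⊤
  · subst hβ
    rw [fLDup, if_pos rfl]
    have hnn : ∀ A : ℝ, (0:EReal) ≤ limsup (fun r : ℝ =>
        elog (ldCount μ 0 (ENNReal.ofReal (r ^ A)) r) * (((-Real.log r)⁻¹ : ℝ) : EReal))
        (𝓝[>] (0:ℝ)) := by
      intro A
      refine limsup_count_nonneg (lo := fun _ => (0:ℝ≥0∞))
        (hi := fun r => ENNReal.ofReal (r ^ A)) hx₀s ?_
      exact (freq_upper_of_dUp_top hx₀s hx₀u (A := A)).mono
        fun r h => ⟨zero_le, h.2⟩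
    refine glue ⟨x₀, hx₀⟩ (le_iInf hnn) ?_
    intro s hs hFs
    obtain ⟨A, hA⟩ := iInf_lt_iff.1 hFs
    obtain ⟨t, ht1, ht2⟩ := EReal.exists_between_coe_real hA
    have ht0 : (0:ℝ) ≤ t := by
      have := lt_of_le_of_lt (hnn A) ht1
      exact_mod_cast this.le
    have hts : t < s := by exact_mod_cast ht2
    have hcnt := count_bound_of_limsup_lt (lo := fun _ => (0:ℝ≥0∞))
      (hi := fun r => ENNReal.ofReal (r ^ A)) ht1
    refine engine2 (fun x hx => (mem_Eab hx).1) ht0 hts ?_ hcnt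
    intro x hx
    exact (dyadic_win_top (mem_Eab hx).1 (mem_Eab hx).2.2 A).mono
      fun n h => ⟨zero_le, h⟩
  · have hβb : β ≠ ⊥ := ereal_ne_bot_of_nonneg (h0.trans hab)
    obtain ⟨b, rfl⟩ : ∃ b : ℝ, β = (b : EReal) :=
      ⟨β.toReal, (EReal.coe_toReal hβ hβb).symm⟩
    rw [fLDup, if_neg (EReal.coe_ne_top b)]
    have hnn : ∀ ε : ℝ, 0 < ε → (0:EReal) ≤ limsup (fun r : ℝ =>
        elog (ldCount μ (rpowE r ((b:EReal) + (ε:EReal))) (rpowE r ((b:EReal) - (ε:EReal))) r)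
          * (((-Real.log r)⁻¹ : ℝ) : EReal)) (𝓝[>] (0:ℝ)) := by
      intro ε hε
      refine limsup_count_nonneg (lo := fun r => rpowE r ((b:EReal) + (ε:EReal)))
        (hi := fun r => rpowE r ((b:EReal) - (ε:EReal))) hx₀s ?_
      refine ((freq_upper_of_dUp hx₀s hx₀u hε).and_eventually
        (win_lower_of_dUp hx₀s hx₀u hε)).mono ?_
      rintro r ⟨⟨_, hup⟩, hlo⟩
      exact ⟨by simp only [rpowE_coe_add]; exact hlo, by simp only [rpowE_coe_sub]; exact hup⟩
    refine glue ⟨x₀, hx₀⟩ (le_iInf fun ε => le_iInf fun hε => hnn ε hε) ?_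
    intro s hs hFs
    obtain ⟨ε, hε'⟩ := iInf_lt_iff.1 hFs
    obtain ⟨hε, hlim⟩ := iInf_lt_iff.1 hε'
    obtain ⟨t, ht1, ht2⟩ := EReal.exists_between_coe_real hlim
    have ht0 : (0:ℝ) ≤ t := by
      have := lt_of_le_of_lt (hnn ε hε) ht1
      exact_mod_cast this.le
    have hts : t < s := by exact_mod_cast ht2
    have hcnt := count_bound_of_limsup_lt (lo := fun r => rpowE r ((b:EReal) + (ε:EReal)))
      (hi := fun r => rpowE r ((b:EReal) - (ε:EReal))) ht1
    refine engine2 (fun x hx => (mem_Eab hx).1) ht0 hts ?_ hcnt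
    intro x hx
    refine (dyadic_win_up (mem_Eab hx).1 (mem_Eab hx).2.2 hε).mono ?_
    rintro n ⟨hl, hu⟩
    exact ⟨by simp only [rpowE_coe_add]; exact hl, by simp only [rpowE_coe_sub]; exact hu⟩

lemma bound3 [IsFiniteMeasure μ] {α β : EReal} (h0 : 0 ≤ α) (hab : α ≤ β) :
    dimHE (Eab μ α β) ≤ fLDlowAB μ α β := by
  rcases (Eab μ α β).eq_empty_or_nonempty with he | hne
  · rw [he]; exact dimHE_empty_le
  obtain ⟨x₀, hx₀⟩ := hne
  obtain ⟨hx₀s, hx₀l, hx₀u⟩ := mem_Eab hx₀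
  by_cases hα : α = ⊤
  · subst hα
    rw [fLDlowAB, if_pos rfl]
    have hnn : ∀ A : ℝ, (0:EReal) ≤ liminf (fun r : ℝ =>
        elog (ldCount μ 0 (ENNReal.ofReal (r ^ A)) r) * (((-Real.log r)⁻¹ : ℝ) : EReal))
        (𝓝[>] (0:ℝ)) := by
      intro A
      refine liminf_count_nonneg (lo := fun _ => (0:ℝ≥0∞))
        (hi := fun r => ENNReal.ofReal (r ^ A)) hx₀s ?_
      exact (win_upper_of_dLow_top hx₀s hx₀l (A := A)).mono fun r h => ⟨zero_le, h⟩
    refine glue ⟨x₀, hx₀⟩ (le_iInf hnn) ?_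
    intro s hs hFs
    obtain ⟨A, hA⟩ := iInf_lt_iff.1 hFs
    obtain ⟨t, ht1, ht2⟩ := EReal.exists_between_coe_real hA
    have ht0 : (0:ℝ) ≤ t := by
      have := lt_of_le_of_lt (hnn A) ht1
      exact_mod_cast this.le
    have hts : t < s := by exact_mod_cast ht2
    have hcnt := count_bound_of_liminf_lt (lo := fun _ => (0:ℝ≥0∞))
      (hi := fun r => ENNReal.ofReal (r ^ A)) ht1
    refine engine1 (fun x hx => (mem_Eab hx).1) ht0 hts ?_ hcnt
    intro x hx
    exact (win_upper_of_dLow_top (mem_Eab hx).1 (mem_Eab hx).2.1 (A := A)).mono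
      fun r h => ⟨zero_le, h⟩
  · have hαb : α ≠ ⊥ := ereal_ne_bot_of_nonneg h0
    obtain ⟨a, rfl⟩ : ∃ a : ℝ, α = (a : EReal) :=
      ⟨α.toReal, (EReal.coe_toReal hα hαb).symm⟩
    rw [fLDlowAB, if_neg (EReal.coe_ne_top a)]
    -- eventual window, valid for any x in the set
    have hwin : ∀ ε : ℝ, 0 < ε → ∀ x ∈ Eab μ ((a:ℝ):EReal) β, ∀ᶠ r in 𝓝[>] (0:ℝ),
        rpowE r (β + (ε:EReal)) ≤ μ (closedBall x r) ∧
        μ (closedBall x r) ≤ rpowE r ((a:EReal) - (ε:EReal)) := by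
      intro ε hε x hx
      have hup := win_upper_of_dLow (mem_Eab hx).1 (mem_Eab hx).2.1 hε
      have hlo : ∀ᶠ r in 𝓝[>] (0:ℝ), rpowE r (β + (ε:EReal)) ≤ μ (closedBall x r) := by
        by_cases hβ : β = ⊤
        · subst hβ
          exact Eventually.of_forall fun r => by rw [rpowE_top_add]; exact zero_le
        · have hβb : β ≠ ⊥ := ereal_ne_bot_of_nonneg (h0.trans hab)
          have hβa : β = ((β.toReal : ℝ) : EReal) := (EReal.coe_toReal hβ hβb).symm
          rw [hβa]
          refine (win_lower_of_dUp (mem_Eab hx).1 (by rw [← hβa]; exact (mem_Eab hx).2.2) hε).mono ?_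
          intro r h
          rw [rpowE_coe_add]
          exact h
      filter_upwards [hup, hlo] with r h1 h2
      exact ⟨h2, by simp only [rpowE_coe_sub]; exact h1⟩
    have hnn : ∀ ε : ℝ, 0 < ε → (0:EReal) ≤ liminf (fun r : ℝ =>
        elog (ldCount μ (rpowE r (β + (ε:EReal))) (rpowE r ((a:EReal) - (ε:EReal))) r)
          * (((-Real.log r)⁻¹ : ℝ) : EReal)) (𝓝[>] (0:ℝ)) := by
      intro ε hε
      exact liminf_count_nonneg (lo := fun r => rpowE r (β + (ε:EReal)))
        (hi := fun r => rpowE r ((a:EReal) - (ε:EReal))) hx₀s (hwin ε hε x₀ hx₀)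
    refine glue ⟨x₀, hx₀⟩ (le_iInf fun ε => le_iInf fun hε => hnn ε hε) ?_
    intro s hs hFs
    obtain ⟨ε, hε'⟩ := iInf_lt_iff.1 hFs
    obtain ⟨hε, hlim⟩ := iInf_lt_iff.1 hε'
    obtain ⟨t, ht1, ht2⟩ := EReal.exists_between_coe_real hlim
    have ht0 : (0:ℝ) ≤ t := by
      have := lt_of_le_of_lt (hnn ε hε) ht1
      exact_mod_cast this.le
    have hts : t < s := by exact_mod_cast ht2
    have hcnt := count_bound_of_liminf_lt (lo := fun r => rpowE r (β + (ε:EReal)))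
      (hi := fun r => rpowE r ((a:EReal) - (ε:EReal))) ht1
    exact engine1 (fun x hx => (mem_Eab hx).1) ht0 hts (hwin ε hε) hcnt

end S11

/-- Proposition 1.8(1), Hausdorff part: general upper bound for
`dim_H E(μ,α,β)` in terms of large-deviations spectra. -/
theorem statement11 (d : ℕ) (hd : 1 ≤ d) (μ : Measure (Euc d)) (hμ : McPlus μ)
    (α β : EReal) (h0 : 0 ≤ α) (hab : α ≤ β) :
    dimHE (Eab μ α β) ≤ min (min (fLDup μ α) (fLDup μ β)) (fLDlowAB μ α β) := by
  haveI : IsFiniteMeasure μ := hμ.1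
  exact le_min (le_min (S11.bound1 h0 hab) (S11.bound2 h0 hab)) (S11.bound3 h0 hab)

end
end
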